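/- arXiv:2004.07656 — 10 statements merged into one kernel-verified Lean document; each statement's English description precedes it below -/
import Mathlib

section
/- Fix u_m > 0 and ε > 0, and define the sawtooth w(σ) := u_m·fract(σ + 1/2) − u_m/2, where fract denotes the fractional part. On the rising ramp of the PWM carrier, i.e. for t in the interval I_n := [(n − 1/2)ε, nε] with n ∈ ℤ, the carrier c(t) := u_m + 4 w(t/ε) is affine and increases from −u_m to u_m. If u : ℝ → ℝ is Lipschitz with constant λ < 4u_m/ε and satisfies −u_m < u(t) < u_m for all t, then there exists exactly one t₁ ∈ I_n with u(t₁) = c(t₁); that is, u crosses the carrier exactly once on each rising ramp. -/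
/-- on each rising ramp of the PWM carrier, a slowly varying input
`u` (Lipschitz with constant `λ < 4 u_m / ε`, staying strictly inside the PWM
range) crosses the carrier exactly once. -/
theorem pwm_unique_crossing_on_rising_ramp
    (u_m ε lam : ℝ) (hum : 0 < u_m) (hε : 0 < ε)
    (w : ℝ → ℝ) (hw : ∀ σ : ℝ, w σ = u_m * Int.fract (σ + 1/2) - u_m/2)
    (c : ℝ → ℝ) (hc : ∀ t : ℝ, c t = u_m + 4 * w (t/ε))
    (u : ℝ → ℝ)
    (hlip : ∀ s t : ℝ, |u s - u t| ≤ lam * |s - t|)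
    (hlam : lam < 4 * u_m / ε)
    (hrange : ∀ t : ℝ, -u_m < u t ∧ u t < u_m)
    (n : ℤ) :
    ∃! t₁ : ℝ, t₁ ∈ Set.Icc (((n : ℝ) - 1/2) * ε) ((n : ℝ) * ε) ∧ u t₁ = c t₁ := by
  set a : ℝ := ((n : ℝ) - 1/2) * ε with ha
  set b : ℝ := (n : ℝ) * ε with hb
  have hab : a < b := by rw [ha, hb]; nlinarith
  -- affine form of the carrier on the rising ramp
  have hcform : ∀ t ∈ Set.Icc a b, c t = u_m + 4 * u_m * (t / ε - n) := by
    intro t ht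
    have h1 : ((n : ℝ) - 1/2) ≤ t / ε := (le_div_iff₀ hε).mpr ht.1
    have h2 : t / ε ≤ (n : ℝ) := (div_le_iff₀ hε).mpr ht.2
    have hfr : Int.fract (t / ε + 1/2) = t / ε + 1/2 - n := by
      rw [← Int.fract_sub_intCast (t / ε + 1/2) n]
      exact Int.fract_eq_self.mpr ⟨by linarith, by linarith⟩
    rw [hc, hw, hfr]; ring
  have hca : c a = -u_m := by
    rw [hcform a ⟨le_refl a, le_of_lt hab⟩, ha]
    field_simp
    ring
  have hcb : c b = u_m := by
    rw [hcform b ⟨le_of_lt hab, le_refl b⟩, hb]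
    field_simp
    ring
  -- strict decrease of u - c on the ramp
  have hstrict : ∀ s ∈ Set.Icc a b, ∀ t ∈ Set.Icc a b, s < t →
      u t - c t < u s - c s := by
    intro s hs t ht hst
    rw [hcform s hs, hcform t ht]
    have habs : |s - t| = t - s := by
      rw [abs_sub_comm]; exact abs_of_pos (by linarith)
    have h1 := hlip s t
    rw [habs] at h1
    have h2 := neg_abs_le (u s - u t)
    have hk : lam * (t - s) < 4 * u_m / ε * (t - s) :=
      mul_lt_mul_of_pos_right hlam (by linarith)
    have hdiv : 4 * u_m * (t / ε - n) - 4 * u_m * (s / ε - n)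
        = 4 * u_m / ε * (t - s) := by field_simp; ring
    linarith
  -- continuity of u
  have hcu : Continuous u := by
    have : LipschitzWith lam.toNNReal u := by
      apply LipschitzWith.of_dist_le_mul
      intro s t
      have : lam * |s - t| ≤ (lam.toNNReal : ℝ) * |s - t| :=
        mul_le_mul_of_nonneg_right (Real.le_coe_toNNReal lam) (abs_nonneg _)
      simpa [Real.dist_eq] using le_trans (hlip s t) this
    exact this.continuous
  have hcont : ContinuousOn (fun t => u t - c t) (Set.Icc a b) := by
    have haff : ContinuousOn (fun t => u t - (u_m + 4 * u_m * (t / ε - n)))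
        (Set.Icc a b) := by
      apply Continuous.continuousOn
      fun_prop
    exact haff.congr (fun t ht => by rw [hcform t ht])
  -- endpoint signs
  have hga : 0 < u a - c a := by
    rw [hca]; have := (hrange a).1; linarith
  have hgb : u b - c b < 0 := by
    rw [hcb]; have := (hrange b).2; linarith
  -- existence by IVT
  have hmem : (0 : ℝ) ∈ Set.Icc (u b - c b) (u a - c a) := ⟨le_of_lt hgb, le_of_lt hga⟩
  obtain ⟨t₁, ht₁, hgt₁⟩ := intermediate_value_Icc' (le_of_lt hab) hcont hmem
  have hgt₁' : u t₁ - c t₁ = 0 := hgt₁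
  refine ⟨t₁, ⟨ht₁, by linarith [hgt₁']⟩, ?_⟩
  intro t₂ ⟨ht₂, heq₂⟩
  have heq₁ : u t₁ = c t₁ := by linarith [hgt₁']
  rcases lt_trichotomy t₂ t₁ with h | h | h
  · have := hstrict t₂ ht₂ t₁ ht₁ h
    rw [heq₁, heq₂] at this; linarith
  · exact h
  · have := hstrict t₁ ht₁ t₂ ht₂ h
    rw [heq₁, heq₂] at this; linarith
end

section
/- Fix u_m > 0. With w(σ) := u_m·fract(σ + 1/2) − u_m/2 and the PWM function M(u,σ) := u_m + u_m·sgn(u − u_m − 4w(σ)) + u_m·sgn(u − u_m + 4w(σ)) (where sgn(x) = 1 if x > 0, −1 if x < 0, 0 if x = 0), for every u ∈ [−u_m, u_m] one has ∫₀¹ M(u,σ) dσ = u. Equivalently, the PWM-induced probing signal s₀(u,σ) := M(u,σ) − u satisfies ∫₀¹ s₀(u,σ) dσ = 0 for every u ∈ [−u_m, u_m]. -/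
open MeasureTheory Set

/-- If `f` is constant `C` on `Ioo a b`, it's interval-integrable and its
integral over `a..b` equals `(b-a)*C`. -/
lemma step_int (f : ℝ → ℝ) (a b C : ℝ) (hab : a ≤ b)
    (h : ∀ x ∈ Set.Ioo a b, f x = C) :
    IntervalIntegrable f volume a b ∧ (∫ x in a..b, f x) = (b - a) * C := by
  have hne : ∀ᵐ x : ℝ, x ≠ b := by
    refine ae_iff.mpr ?_
    simpa using measure_singleton (α := ℝ) b
  have hae : f =ᵐ[volume.restrict (Set.Ioc a b)] fun _ => C := by
    rw [Filter.EventuallyEq, ae_restrict_iff' measurableSet_Ioc]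
    filter_upwards [hne] with x hx hxI
    exact h x ⟨hxI.1, lt_of_le_of_ne hxI.2 hx⟩
  have hint : IntegrableOn f (Set.Ioc a b) :=
    (integrableOn_const (by simp) (by simp)).congr hae.symm
  have hII : IntervalIntegrable f volume a b := by
    rw [intervalIntegrable_iff, uIoc_of_le hab]
    exact hint
  refine ⟨hII, ?_⟩
  rw [intervalIntegral.integral_of_le hab, integral_congr_ae hae]
  simp [Real.volume_Ioc, ENNReal.toReal_ofReal (sub_nonneg.2 hab), mul_comm, hab]

/-- the PWM modulation function `M(u,·)` has mean `u` over one
period, equivalently the PWM-induced probing signal `s₀(u,·)` has zero mean. -/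
theorem pwm_modulation_mean
    (u_m : ℝ) (hum : 0 < u_m)
    (w : ℝ → ℝ) (hw : ∀ σ : ℝ, w σ = u_m * Int.fract (σ + 1/2) - u_m/2)
    (M : ℝ → ℝ → ℝ)
    (hM : ∀ u σ : ℝ, M u σ =
      u_m + u_m * Real.sign (u - u_m - 4 * w σ) + u_m * Real.sign (u - u_m + 4 * w σ))
    (s₀ : ℝ → ℝ → ℝ) (hs₀ : ∀ u σ : ℝ, s₀ u σ = M u σ - u) :
    ∀ u ∈ Set.Icc (-u_m) u_m,
      (∫ σ in (0:ℝ)..1, M u σ) = u ∧ (∫ σ in (0:ℝ)..1, s₀ u σ) = 0 := by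
  intro u hu
  obtain ⟨hul, hur⟩ := hu
  set c : ℝ := (u_m - u) / (4 * u_m) with hc
  have h4 : (0:ℝ) < 4 * u_m := by linarith
  have hc0 : 0 ≤ c := div_nonneg (by linarith) (le_of_lt h4)
  have hc2 : c ≤ 1/2 := by
    rw [hc, div_le_iff₀ h4]; linarith
  have hcval : 4 * u_m * c = u_m - u := by
    rw [hc]; field_simp
  -- w on the first half
  have hw1 : ∀ σ : ℝ, 0 ≤ σ → σ < 1/2 → w σ = u_m * σ := by
    intro σ h1 h2
    rw [hw, Int.fract_eq_self.mpr ⟨by linarith, by linarith⟩]; ring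
  have hw2 : ∀ σ : ℝ, 1/2 ≤ σ → σ < 1 → w σ = u_m * σ - u_m := by
    intro σ h1 h2
    have : Int.fract (σ + 1/2) = σ - 1/2 := by
      have : σ + 1/2 = (σ - 1/2) + 1 := by ring
      rw [this, Int.fract_add_one, Int.fract_eq_self.mpr ⟨by linarith, by linarith⟩]
    rw [hw, this]; ring
  -- piece 1 : (0, c), value -u_m
  have hp1 := step_int (M u) 0 c (-u_m) hc0 (by
    intro σ ⟨hσ1, hσ2⟩
    have hσh : σ < 1/2 := lt_of_lt_of_le hσ2 hc2
    rw [hM, hw1 σ (le_of_lt hσ1) hσh,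
      Real.sign_of_neg (by nlinarith : u - u_m - 4 * (u_m * σ) < 0),
      Real.sign_of_neg (by nlinarith : u - u_m + 4 * (u_m * σ) < 0)]
    ring)
  -- piece 2 : (c, 1/2), value u_m
  have hp2 := step_int (M u) c (1/2) u_m hc2 (by
    intro σ ⟨hσ1, hσ2⟩
    have hσ0 : 0 < σ := lt_of_le_of_lt hc0 hσ1
    rw [hM, hw1 σ (le_of_lt hσ0) hσ2,
      Real.sign_of_neg (by nlinarith : u - u_m - 4 * (u_m * σ) < 0),
      Real.sign_of_pos (by nlinarith : 0 < u - u_m + 4 * (u_m * σ))]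
    ring)
  -- piece 3 : (1/2, 1-c), value u_m
  have hp3 := step_int (M u) (1/2) (1 - c) u_m (by linarith) (by
    intro σ ⟨hσ1, hσ2⟩
    have hσ1' : σ < 1 := by linarith
    rw [hM, hw2 σ (le_of_lt hσ1) hσ1',
      Real.sign_of_pos (by nlinarith : 0 < u - u_m - 4 * (u_m * σ - u_m)),
      Real.sign_of_neg (by nlinarith : u - u_m + 4 * (u_m * σ - u_m) < 0)]
    ring)
  -- piece 4 : (1-c, 1), value -u_m
  have hp4 := step_int (M u) (1 - c) 1 (-u_m) (by linarith) (by
    intro σ ⟨hσ1, hσ2⟩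
    have hσh : 1/2 ≤ σ := by linarith
    rw [hM, hw2 σ hσh hσ2,
      Real.sign_of_neg (by nlinarith : u - u_m - 4 * (u_m * σ - u_m) < 0),
      Real.sign_of_neg (by nlinarith : u - u_m + 4 * (u_m * σ - u_m) < 0)]
    ring)
  have hsplit : (∫ σ in (0:ℝ)..1, M u σ) =
      (∫ σ in (0:ℝ)..c, M u σ) + (∫ σ in c..(1/2:ℝ), M u σ)
      + (∫ σ in (1/2:ℝ)..(1-c), M u σ) + (∫ σ in (1-c)..(1:ℝ), M u σ) := by
    rw [intervalIntegral.integral_add_adjacent_intervals hp1.1 hp2.1,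
      intervalIntegral.integral_add_adjacent_intervals (hp1.1.trans hp2.1) hp3.1,
      intervalIntegral.integral_add_adjacent_intervals
        ((hp1.1.trans hp2.1).trans hp3.1) hp4.1]
  have hmean : (∫ σ in (0:ℝ)..1, M u σ) = u := by
    rw [hsplit, hp1.2, hp2.2, hp3.2, hp4.2]; nlinarith [hcval]
  refine ⟨hmean, ?_⟩
  have hint : IntervalIntegrable (M u) volume 0 1 :=
    ((hp1.1.trans hp2.1).trans hp3.1).trans hp4.1
  have : (∫ σ in (0:ℝ)..1, s₀ u σ) = (∫ σ in (0:ℝ)..1, M u σ - u) := by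
    apply intervalIntegral.integral_congr
    intro σ _; exact hs₀ u σ
  rw [this, intervalIntegral.integral_sub hint intervalIntegrable_const, hmean]
  simp
end

section
/- Fix u_m > 0 and u ∈ [−u_m, u_m]. With w(σ) := u_m·fract(σ + 1/2) − u_m/2, s₀(u,σ) := u_m − u + u_m·sgn(u − u_m − 4w(σ)) + u_m·sgn(u − u_m + 4w(σ)), and s₁(u,σ) := (1 − u/u_m)·w(σ) − |(u − u_m)/4 − w(σ)| + |(u − u_m)/4 + w(σ)|, the function s₁ is the zero-mean primitive of s₀ in the second argument; precisely: (i) s₁(u,0) = 0 and s₁(u,τ) = ∫₀^τ s₀(u,σ) dσ for all τ ∈ [0,1]; (ii) s₁(u,·) is 1-periodic; (iii) ∫₀¹ s₁(u,σ) dσ = 0. -/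
open MeasureTheory Set

private lemma msign : Measurable Real.sign := by
  have : Real.sign = fun r : ℝ => if r < 0 then (-1:ℝ) else if 0 < r then 1 else 0 :=
    funext fun r => rfl
  rw [this]
  exact Measurable.ite measurableSet_Iio measurable_const
    (Measurable.ite measurableSet_Ioi measurable_const measurable_const)

private lemma abs_sign_le (x : ℝ) : |Real.sign x| ≤ 1 := by
  rcases Real.sign_apply_eq x with h | h | h <;> rw [h] <;> norm_num

private lemma sign_four_mul (x : ℝ) : Real.sign (4 * x) = Real.sign x := by
  rcases lt_trichotomy x 0 with h | h | h
  · rw [Real.sign_of_neg h, Real.sign_of_neg (by linarith)]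
  · simp [h]
  · rw [Real.sign_of_pos h, Real.sign_of_pos (by linarith)]

private lemma bddII {f : ℝ → ℝ} (hm : Measurable f) {C : ℝ}
    (hb : ∀ x, |f x| ≤ C) (a b : ℝ) : IntervalIntegrable f volume a b := by
  rw [intervalIntegrable_iff]
  exact Measure.integrableOn_of_bounded measure_Ioc_lt_top.ne hm.aestronglyMeasurable
    (ae_of_all _ fun x => by simpa using hb x)

private lemma ae_ne_real (t : ℝ) : ∀ᵐ y : ℝ, y ≠ t := by
  rw [ae_iff]
  simp only [ne_eq, not_not, Set.setOf_eq_eq_singleton]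
  exact measure_singleton t

private lemma integral_sign_abs {p q : ℝ} (hpq : p ≤ q) :
    ∫ y in p..q, Real.sign y = |q| - |p| := by
  set D : ℝ → ℝ := fun y => if y < 0 then -1 else 1 with hD
  have hDm : Measurable D :=
    Measurable.ite measurableSet_Iio measurable_const measurable_const
  have hDint : IntervalIntegrable D volume p q :=
    bddII hDm (C := 1) (fun x => by by_cases h : x < 0 <;> simp [hD, h]) p q
  have hderiv : ∀ x ∈ Set.Ioo p q, HasDerivWithinAt (fun y : ℝ => |y|) (D x) (Set.Ioi x) x := by
    intro x _
    rcases lt_trichotomy x 0 with h | h | h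
    · simpa [hD, h] using (hasDerivAt_abs_neg h).hasDerivWithinAt
    · subst h
      have hid : HasDerivWithinAt (fun y : ℝ => y) 1 (Set.Ioi (0:ℝ)) 0 :=
        (hasDerivAt_id (0:ℝ)).hasDerivWithinAt
      have := hid.congr (f₁ := fun y : ℝ => |y|) (fun y hy => abs_of_pos hy) (by simp)
      simpa [hD] using this
    · simpa [hD, h, not_lt.mpr h.le] using (hasDerivAt_abs_pos h).hasDerivWithinAt
  have h1 : ∫ y in p..q, D y = |q| - |p| :=
    intervalIntegral.integral_eq_sub_of_hasDeriv_right_of_le hpq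
      continuous_abs.continuousOn hderiv hDint
  rw [← h1]
  apply intervalIntegral.integral_congr_ae
  filter_upwards [ae_ne_real 0] with y hy _
  rcases lt_or_gt_of_ne hy with h | h
  · rw [Real.sign_of_neg h]; simp [hD, h]
  · rw [Real.sign_of_pos h]; simp [hD, not_lt.mpr h.le]

private lemma phi_ftc (a c : ℝ) {p q : ℝ} (hpq : p ≤ q) :
    ∫ y in p..q, (a + Real.sign (c - y) + Real.sign (c + y)) =
      (a*q - |c - q| + |c + q|) - (a*p - |c - p| + |c + p|) := by
  have i1 : IntervalIntegrable (fun _ : ℝ => a) volume p q := intervalIntegrable_const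
  have i2 : IntervalIntegrable (fun y => Real.sign (c - y)) volume p q :=
    bddII (msign.comp (measurable_const.sub measurable_id)) (C := 1)
      (fun x => abs_sign_le _) p q
  have i3 : IntervalIntegrable (fun y => Real.sign (c + y)) volume p q :=
    bddII (msign.comp (measurable_const.add measurable_id)) (C := 1)
      (fun x => abs_sign_le _) p q
  rw [intervalIntegral.integral_add (i1.add i2) i3, intervalIntegral.integral_add i1 i2]
  have e1 : (∫ _ in p..q, a) = (q - p) * a := by
    rw [intervalIntegral.integral_const, smul_eq_mul]
  have e2 : (∫ y in p..q, Real.sign (c - y)) = |c - p| - |c - q| := by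
    rw [intervalIntegral.integral_comp_sub_left (fun x => Real.sign x) c]
    exact integral_sign_abs (by linarith)
  have e3 : (∫ y in p..q, Real.sign (c + y)) = |q + c| - |p + c| := by
    simp_rw [add_comm c]
    rw [intervalIntegral.integral_comp_add_right (fun x => Real.sign x) c]
    exact integral_sign_abs (by linarith)
  rw [e1, e2, e3, show |q + c| = |c + q| by rw [add_comm], show |p + c| = |c + p| by rw [add_comm]]
  ring

/-- the explicit formula `s₁` is the zero-mean primitive in the
second argument of the PWM-induced probing signal `s₀`. -/
theorem pwm_s1_is_zero_mean_primitive
    (u_m : ℝ) (hum : 0 < u_m) (u : ℝ) (hu : u ∈ Set.Icc (-u_m) u_m)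
    (w : ℝ → ℝ) (hw : ∀ σ : ℝ, w σ = u_m * Int.fract (σ + 1/2) - u_m/2)
    (s₀ : ℝ → ℝ → ℝ)
    (hs₀ : ∀ v σ : ℝ, s₀ v σ =
      u_m - v + u_m * Real.sign (v - u_m - 4 * w σ) + u_m * Real.sign (v - u_m + 4 * w σ))
    (s₁ : ℝ → ℝ → ℝ)
    (hs₁ : ∀ v σ : ℝ, s₁ v σ =
      (1 - v/u_m) * w σ - |(v - u_m)/4 - w σ| + |(v - u_m)/4 + w σ|) :
    (s₁ u 0 = 0 ∧ ∀ τ ∈ Set.Icc (0:ℝ) 1, s₁ u τ = ∫ σ in (0:ℝ)..τ, s₀ u σ) ∧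
      Function.Periodic (s₁ u) 1 ∧
      (∫ σ in (0:ℝ)..1, s₁ u σ) = 0 := by
  obtain ⟨hul, hur⟩ := hu
  set c : ℝ := (u - u_m)/4 with hc
  set a : ℝ := 1 - u/u_m with ha
  set φ : ℝ → ℝ := fun y => a*y - |c - y| + |c + y| with hφ
  have hc1 : c ≤ 0 := by rw [hc]; linarith
  have hc2 : -(u_m/2) ≤ c := by rw [hc]; linarith
  have hua : u_m * a = u_m - u := by
    rw [ha]; field_simp
  have hφ0 : φ 0 = 0 := by simp [hφ]
  have hφhalf : φ (u_m/2) = 0 := by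
    simp only [hφ]
    rw [abs_of_nonpos (by linarith), abs_of_nonneg (by linarith)]
    have : a * (u_m/2) = (u_m - u)/2 := by linear_combination hua / 2
    rw [this, hc]; ring
  have hφnhalf : φ (-(u_m/2)) = 0 := by
    simp only [hφ]
    rw [show c - -(u_m/2) = c + u_m/2 by ring, show c + -(u_m/2) = -(u_m/2 - c) by ring,
      abs_neg, abs_of_nonneg (by linarith), abs_of_nonneg (by linarith)]
    have : a * -(u_m/2) = -((u_m - u)/2) := by linear_combination -hua / 2
    rw [this, hc]; ring
  have hφodd : ∀ y, φ (-y) = -φ y := by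
    intro y
    simp only [hφ]
    rw [show c - -y = c + y by ring, show c + -y = -(y - c) by ring, abs_neg,
      show |c - y| = |y - c| from abs_sub_comm c y]
    ring
  -- w facts
  have hw0 : w 0 = 0 := by
    rw [hw, show (0:ℝ) + 1/2 = 1/2 by norm_num,
      Int.fract_eq_self.mpr ⟨by norm_num, by norm_num⟩]
    ring
  have hwper : ∀ σ : ℝ, w (σ + 1) = w σ := by
    intro σ
    rw [hw, hw, show σ + 1 + 1/2 = (σ + 1/2) + 1 by ring, Int.fract_add_one]
  have hwIco1 : ∀ σ ∈ Set.Ico (0:ℝ) (1/2), w σ = u_m * σ := by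
    intro σ hσ
    rw [hw, Int.fract_eq_self.mpr ⟨by linarith [hσ.1], by linarith [hσ.2]⟩]
    ring
  have hwIco2 : ∀ σ ∈ Set.Ico (1/2:ℝ) 1, w σ = u_m * σ - u_m := by
    intro σ hσ
    rw [hw, show σ + 1/2 = (σ - 1/2) + 1 by ring, Int.fract_add_one,
      Int.fract_eq_self.mpr ⟨by linarith [hσ.1], by linarith [hσ.2]⟩]
    ring
  -- s₁, s₀ in terms of φ and ψ
  have s1φ : ∀ σ, s₁ u σ = φ (w σ) := by
    intro σ
    rw [hs₁]
  have s0ψ : ∀ σ, s₀ u σ = u_m * (a + Real.sign (c - w σ) + Real.sign (c + w σ)) := by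
    intro σ
    rw [hs₀, show u - u_m - 4 * w σ = 4 * (c - w σ) by rw [hc]; ring,
      show u - u_m + 4 * w σ = 4 * (c + w σ) by rw [hc]; ring,
      sign_four_mul, sign_four_mul]
    have : u_m - u = u_m * a := hua.symm
    rw [this]; ring
  -- measurability and integrability of s₀ u
  have hwm : Measurable w := by
    have : w = fun σ => u_m * Int.fract (σ + 1/2) - u_m/2 := funext hw
    rw [this]
    exact (measurable_const.mul (measurable_fract.comp (measurable_id.add_const _))).sub
      measurable_const
  have hmeas : Measurable (s₀ u) := by
    have : s₀ u = fun σ => u_m * (a + Real.sign (c - w σ) + Real.sign (c + w σ)) :=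
      funext s0ψ
    rw [this]
    exact measurable_const.mul
      (((measurable_const.add (msign.comp (measurable_const.sub hwm))).add
        (msign.comp (measurable_const.add hwm))))
  have hbound : ∀ σ, |s₀ u σ| ≤ |u_m| * (|a| + 2) := by
    intro σ
    rw [s0ψ, abs_mul]
    refine mul_le_mul_of_nonneg_left ?_ (abs_nonneg _)
    calc |a + Real.sign (c - w σ) + Real.sign (c + w σ)|
        ≤ |a| + |Real.sign (c - w σ)| + |Real.sign (c + w σ)| := abs_add_three _ _ _
      _ ≤ |a| + 2 := by linarith [abs_sign_le (c - w σ), abs_sign_le (c + w σ)]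
  have hint : ∀ t1 t2 : ℝ, IntervalIntegrable (s₀ u) MeasureTheory.volume t1 t2 :=
    fun t1 t2 => bddII hmeas hbound t1 t2
  -- the FTC piece computation
  have piece : ∀ b t1 t2 : ℝ, t1 ≤ t2 →
      (∀ σ ∈ Set.Ioo t1 t2, w σ = u_m * σ + b) →
      (∫ σ in t1..t2, s₀ u σ) = φ (u_m * t2 + b) - φ (u_m * t1 + b) := by
    intro b t1 t2 h12 hwv
    have hcongr : (∫ σ in t1..t2, s₀ u σ) =
        ∫ σ in t1..t2,
          u_m * ((fun y => a + Real.sign (c - y) + Real.sign (c + y)) (u_m * σ + b)) := by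
      apply intervalIntegral.integral_congr_ae
      filter_upwards [ae_ne_real t2] with σ hσ hmem
      rw [Set.uIoc_of_le h12] at hmem
      have hmem' : σ ∈ Set.Ioo t1 t2 := ⟨hmem.1, lt_of_le_of_ne hmem.2 hσ⟩
      rw [s0ψ, hwv σ hmem']
    rw [hcongr, intervalIntegral.integral_const_mul,
      intervalIntegral.integral_comp_mul_add
        (fun y => a + Real.sign (c - y) + Real.sign (c + y)) hum.ne' b,
      smul_eq_mul,
      phi_ftc a c (p := u_m * t1 + b) (q := u_m * t2 + b)
        (by nlinarith [mul_le_mul_of_nonneg_left h12 hum.le])]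
    simp only [hφ]
    field_simp
  have int1 : ∀ τ : ℝ, 0 ≤ τ → τ ≤ 1/2 → (∫ σ in (0:ℝ)..τ, s₀ u σ) = φ (u_m * τ) := by
    intro τ h0 h1
    have := piece 0 0 τ h0 (fun σ hσ => by
      rw [hwIco1 σ ⟨hσ.1.le, lt_of_lt_of_le hσ.2 h1⟩]; ring)
    rw [this]
    rw [show u_m * τ + 0 = u_m * τ by ring, show u_m * 0 + 0 = 0 by ring, hφ0, sub_zero]
  have int2 : ∀ τ1 τ2 : ℝ, 1/2 ≤ τ1 → τ1 ≤ τ2 → τ2 ≤ 1 →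
      (∫ σ in τ1..τ2, s₀ u σ) = φ (u_m * τ2 - u_m) - φ (u_m * τ1 - u_m) := by
    intro τ1 τ2 ha1 ha2 ha3
    have := piece (-u_m) τ1 τ2 ha2 (fun σ hσ => by
      rw [hwIco2 σ ⟨le_trans ha1 hσ.1.le, lt_of_lt_of_le hσ.2 ha3⟩]; ring)
    rw [this, show u_m * τ2 + -u_m = u_m * τ2 - u_m by ring,
      show u_m * τ1 + -u_m = u_m * τ1 - u_m by ring]
  -- the main identity
  have hzero : s₁ u 0 = 0 := by rw [s1φ, hw0, hφ0]
  have hkey : ∀ τ ∈ Set.Icc (0:ℝ) 1, s₁ u τ = ∫ σ in (0:ℝ)..τ, s₀ u σ := by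
    intro τ hτ
    obtain ⟨hτ0, hτ1⟩ := hτ
    rcases le_total τ (1/2) with hhalf | hhalf
    · rw [int1 τ hτ0 hhalf, s1φ]
      rcases lt_or_eq_of_le hhalf with hlt | heq
      · rw [hwIco1 τ ⟨hτ0, hlt⟩]
      · subst heq
        rw [hwIco2 (1/2) ⟨le_refl _, by norm_num⟩,
          show u_m * (1/2) - u_m = -(u_m/2) by ring, hφnhalf,
          show u_m * (1/2) = u_m/2 by ring, hφhalf]
    · have hsplit : (∫ σ in (0:ℝ)..τ, s₀ u σ) =
          (∫ σ in (0:ℝ)..(1/2), s₀ u σ) + ∫ σ in (1/2:ℝ)..τ, s₀ u σ :=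
        (intervalIntegral.integral_add_adjacent_intervals (hint 0 (1/2)) (hint (1/2) τ)).symm
      rw [hsplit, int1 (1/2) (by norm_num) le_rfl, int2 (1/2) τ le_rfl hhalf hτ1,
        show u_m * (1/2) - u_m = -(u_m/2) by ring, hφnhalf,
        show u_m * (1/2) = u_m/2 by ring, hφhalf, s1φ]
      rcases lt_or_eq_of_le hτ1 with hlt | heq
      · rw [hwIco2 τ ⟨hhalf, hlt⟩]; ring
      · subst heq
        rw [show (1:ℝ) = 0 + 1 by ring, hwper 0, hw0,
          show u_m * (0 + 1) - u_m = 0 by ring, hφ0]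
        ring
  -- periodicity
  have hper : Function.Periodic (s₁ u) 1 := by
    intro σ
    rw [s1φ, s1φ, hwper]
  -- oddness
  have hodd : ∀ σ, s₁ u (-σ) = -s₁ u σ := by
    intro σ
    rw [s1φ, s1φ]
    by_cases hf : Int.fract (σ + 1/2) = 0
    · have h1 : w σ = -(u_m/2) := by rw [hw, hf]; ring
      have h2 : w (-σ) = -(u_m/2) := by
        rw [hw, show -σ + 1/2 = -(σ + 1/2) + 1 by ring, Int.fract_add_one,
          Int.fract_neg_eq_zero.mpr hf]
        ring
      rw [h1, h2, hφnhalf]; ring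
    · have h2 : w (-σ) = -(w σ) := by
        rw [hw, hw, show -σ + 1/2 = -(σ + 1/2) + 1 by ring, Int.fract_add_one,
          Int.fract_neg hf]
        ring
      rw [h2, hφodd]
  -- zero mean
  have hzm : (∫ σ in (0:ℝ)..1, s₁ u σ) = 0 := by
    have hshift := hper.intervalIntegral_add_eq 0 (-(1/2))
    norm_num at hshift
    have h1 : (∫ x in (-(1/2):ℝ)..(1/2), s₁ u (-x)) = ∫ x in (-(1/2):ℝ)..(1/2), s₁ u x := by
      rw [intervalIntegral.integral_comp_neg (fun x => s₁ u x)]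
      norm_num
    have h2 : (∫ x in (-(1/2):ℝ)..(1/2), s₁ u (-x)) =
        -∫ x in (-(1/2):ℝ)..(1/2), s₁ u x := by
      simp_rw [hodd]
      exact intervalIntegral.integral_neg
    rw [hshift]
    linarith [h1, h2]
  exact ⟨⟨hzero, hkey⟩, hper, hzm⟩
end

section
/- Fix u_m > 0. The function s₁(u,σ) := (1 − u/u_m)·w(σ) − |(u − u_m)/4 − w(σ)| + |(u − u_m)/4 + w(σ)|, with w(σ) := u_m·fract(σ + 1/2) − u_m/2, is jointly continuous on [−u_m, u_m] × ℝ; in particular, even though w has a jump discontinuity at every σ ∈ 1/2 + ℤ, the function σ ↦ s₁(u,σ) is continuous there (its one-sided limits both equal 0). -/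
set_option maxHeartbeats 1000000

lemma pwm_aux_bound (u_m v f : ℝ) (h1 : -u_m ≤ v) (h2 : v ≤ u_m)
    (hf0 : 0 ≤ f) (hf1 : f ≤ 1) :
    abs ((u_m - v) * (f - 1/2) - |(v - u_m)/4 - (u_m * f - u_m/2)| +
      |(v - u_m)/4 + (u_m * f - u_m/2)|) ≤ 2 * u_m * min f (1 - f) := by
  rcases le_total f (1 - f) with hm | hm <;>
    [rw [min_eq_left hm]; rw [min_eq_right hm]] <;>
  rcases abs_cases ((v - u_m)/4 - (u_m * f - u_m/2)) with ⟨e1, h1'⟩ | ⟨e1, h1'⟩ <;>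
  rcases abs_cases ((v - u_m)/4 + (u_m * f - u_m/2)) with ⟨e2, h2'⟩ | ⟨e2, h2'⟩ <;>
  rw [e1, e2, abs_le] <;>
  constructor <;>
  linarith [mul_nonneg (by linarith : (0:ℝ) ≤ u_m - v) hf0,
    mul_nonneg (by linarith : (0:ℝ) ≤ u_m - v) (by linarith : (0:ℝ) ≤ 1 - f),
    mul_nonneg (by linarith : (0:ℝ) ≤ u_m + v) hf0,
    mul_nonneg (by linarith : (0:ℝ) ≤ u_m + v) (by linarith : (0:ℝ) ≤ 1 - f)]


/-- `s₁` is jointly continuous on `[-u_m, u_m] × ℝ`; in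
particular, for each `u` in the PWM range, `σ ↦ s₁ u σ` is continuous on all
of `ℝ` (even across the jumps of the sawtooth `w`). -/
theorem pwm_s1_continuous
    (u_m : ℝ) (hum : 0 < u_m)
    (w : ℝ → ℝ) (hw : ∀ σ : ℝ, w σ = u_m * Int.fract (σ + 1/2) - u_m/2)
    (s₁ : ℝ → ℝ → ℝ)
    (hs₁ : ∀ v σ : ℝ, s₁ v σ =
      (1 - v/u_m) * w σ - |(v - u_m)/4 - w σ| + |(v - u_m)/4 + w σ|) :
    ContinuousOn (fun p : ℝ × ℝ => s₁ p.1 p.2)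
        (Set.Icc (-u_m) u_m ×ˢ (Set.univ : Set ℝ)) ∧
      ∀ u ∈ Set.Icc (-u_m) u_m, Continuous (fun σ : ℝ => s₁ u σ) := by
  have hum' : u_m ≠ 0 := hum.ne'
  -- normal form of s₁
  have hs : ∀ v τ : ℝ, s₁ v τ =
      (u_m - v) * (Int.fract (τ + 1/2) - 1/2)
        - |(v - u_m)/4 - (u_m * Int.fract (τ + 1/2) - u_m/2)|
        + |(v - u_m)/4 + (u_m * Int.fract (τ + 1/2) - u_m/2)| := by
    intro v τ
    rw [hs₁, hw]
    have : (1 - v/u_m) * (u_m * Int.fract (τ + 1/2) - u_m/2)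
        = (u_m - v) * (Int.fract (τ + 1/2) - 1/2) := by
      field_simp
    rw [this]
  -- the bound
  have hbd : ∀ v τ : ℝ, -u_m ≤ v → v ≤ u_m →
      |s₁ v τ| ≤ 2 * u_m * min (Int.fract (τ + 1/2)) (1 - Int.fract (τ + 1/2)) := by
    intro v τ h1 h2
    rw [hs]
    exact pwm_aux_bound u_m v _ h1 h2 (Int.fract_nonneg _) (Int.fract_lt_one _).le
  have key : ContinuousOn (fun p : ℝ × ℝ => s₁ p.1 p.2)
      (Set.Icc (-u_m) u_m ×ˢ (Set.univ : Set ℝ)) := by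
    rintro ⟨u, σ⟩ ⟨hu, -⟩
    by_cases h : σ + 1/2 = (⌊σ + 1/2⌋ : ℝ)
    · -- jump point: squeeze
      have hσf : Int.fract (σ + 1/2) = 0 := by
        rw [Int.fract]; linarith
      have hval : s₁ u σ = 0 := by
        have := hbd u σ hu.1 hu.2
        rw [hσf, show min (0:ℝ) (1 - 0) = 0 by norm_num, mul_zero] at this
        exact abs_eq_zero.1 (le_antisymm this (abs_nonneg _))
      rw [ContinuousWithinAt, hval]
      apply squeeze_zero_norm'
        (a := fun p : ℝ × ℝ =>
          2 * u_m * min (Int.fract (p.2 + 1/2)) (1 - Int.fract (p.2 + 1/2)))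
      · filter_upwards [self_mem_nhdsWithin] with p hp
        exact hbd p.1 p.2 hp.1.1 hp.1.2
      · -- tendsto of the bound to 0
        have hg : Filter.Tendsto
            (fun τ : ℝ => 2 * u_m * min (Int.fract (τ + 1/2)) (1 - Int.fract (τ + 1/2)))
            (nhds σ) (nhds 0) := by
          rw [← nhdsLT_sup_nhdsGE σ, Filter.tendsto_sup]
          have hmin0 : ∀ τ : ℝ,
              0 ≤ 2 * u_m * min (Int.fract (τ + 1/2)) (1 - Int.fract (τ + 1/2)) := by
            intro τ
            apply mul_nonneg (by linarith)
            exact le_min (Int.fract_nonneg _) (by linarith [Int.fract_lt_one (τ + 1/2)])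
          constructor
          · -- left of σ: fract → 1, so 1 - fract → 0
            have hmap : Filter.Tendsto (fun τ : ℝ => τ + 1/2) (nhdsWithin σ (Set.Iio σ))
                (nhdsWithin ((⌊σ + 1/2⌋ : ℤ) : ℝ) (Set.Iio ((⌊σ + 1/2⌋ : ℤ) : ℝ))) := by
              rw [← h]
              apply tendsto_nhdsWithin_of_tendsto_nhds_of_eventually_within
              · exact Filter.Tendsto.mono_left
                  (((continuous_id.add continuous_const).tendsto σ)) nhdsWithin_le_nhds
              · filter_upwards [self_mem_nhdsWithin] with τ hτ
                exact add_lt_add_left (Set.mem_Iio.mp hτ) _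
            have hfr := (tendsto_fract_left' (⌊σ + 1/2⌋ : ℤ)).comp hmap
            apply squeeze_zero' (Filter.Eventually.of_forall hmin0)
              (g := fun τ : ℝ => 2 * u_m * (1 - Int.fract (τ + 1/2)))
            · apply Filter.Eventually.of_forall
              intro τ
              exact mul_le_mul_of_nonneg_left (min_le_right _ _) (by linarith)
            · have : Filter.Tendsto (fun τ : ℝ => 2 * u_m * (1 - Int.fract (τ + 1/2)))
                  (nhdsWithin σ (Set.Iio σ)) (nhds (2 * u_m * (1 - 1))) :=
                (tendsto_const_nhds.mul (tendsto_const_nhds.sub hfr))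
              simpa using this
          · -- right of σ: fract → 0
            have hmap : Filter.Tendsto (fun τ : ℝ => τ + 1/2) (nhdsWithin σ (Set.Ici σ))
                (nhdsWithin ((⌊σ + 1/2⌋ : ℤ) : ℝ) (Set.Ici ((⌊σ + 1/2⌋ : ℤ) : ℝ))) := by
              rw [← h]
              apply tendsto_nhdsWithin_of_tendsto_nhds_of_eventually_within
              · exact Filter.Tendsto.mono_left
                  (((continuous_id.add continuous_const).tendsto σ)) nhdsWithin_le_nhds
              · filter_upwards [self_mem_nhdsWithin] with τ hτ
                exact add_le_add_left (Set.mem_Ici.mp hτ) _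
            have hfr := (tendsto_fract_right' (⌊σ + 1/2⌋ : ℤ)).comp hmap
            apply squeeze_zero' (Filter.Eventually.of_forall hmin0)
              (g := fun τ : ℝ => 2 * u_m * Int.fract (τ + 1/2))
            · apply Filter.Eventually.of_forall
              intro τ
              exact mul_le_mul_of_nonneg_left (min_le_left _ _) (by linarith)
            · have : Filter.Tendsto (fun τ : ℝ => 2 * u_m * Int.fract (τ + 1/2))
                  (nhdsWithin σ (Set.Ici σ)) (nhds (2 * u_m * 0)) :=
                tendsto_const_nhds.mul hfr
              simpa using this
        exact hg.comp ((continuous_snd.tendsto _).mono_left nhdsWithin_le_nhds)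
    · -- fract continuous here
      apply ContinuousWithinAt.congr
        (f := fun p : ℝ × ℝ =>
          (u_m - p.1) * (Int.fract (p.2 + 1/2) - 1/2)
            - |(p.1 - u_m)/4 - (u_m * Int.fract (p.2 + 1/2) - u_m/2)|
            + |(p.1 - u_m)/4 + (u_m * Int.fract (p.2 + 1/2) - u_m/2)|)
      · apply ContinuousAt.continuousWithinAt
        have hfr : ContinuousAt (fun p : ℝ × ℝ => Int.fract (p.2 + 1/2)) (u, σ) := by
          have hbase : ContinuousAt (fun p : ℝ × ℝ => p.2 + 1/2) (u, σ) :=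
            (continuous_snd.add continuous_const).continuousAt
          exact ContinuousAt.comp (f := fun p : ℝ × ℝ => p.2 + 1/2) (g := Int.fract) (continuousAt_fract h) hbase
        have cW : ContinuousAt (fun p : ℝ × ℝ => u_m * Int.fract (p.2 + 1/2) - u_m/2) (u, σ) :=
          (continuousAt_const.mul hfr).sub continuousAt_const
        have cA : ContinuousAt (fun p : ℝ × ℝ => (p.1 - u_m)/4) (u, σ) :=
          ((continuous_fst.sub continuous_const).div_const 4).continuousAt
        have cU : ContinuousAt (fun p : ℝ × ℝ => u_m - p.1) (u, σ) :=
          (continuous_const.sub continuous_fst).continuousAt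
        exact ((cU.mul (hfr.sub continuousAt_const)).sub ((cA.sub cW).abs)).add ((cA.add cW).abs)
      · intro p hp
        rw [hs]
      · rw [hs]
  refine ⟨key, fun u hu => ?_⟩
  rw [← continuousOn_univ]
  have hcomp : ContinuousOn (fun σ : ℝ => ((u, σ) : ℝ × ℝ)) Set.univ :=
    (continuous_const.prodMk continuous_id).continuousOn
  exact key.comp hcomp (fun σ _ => ⟨hu, trivial⟩)
end

section
/- Fix u_m > 0 and let s₁(u,σ) := (1 − u/u_m)·w(σ) − |(u − u_m)/4 − w(σ)| + |(u − u_m)/4 + w(σ)| with w(σ) := u_m·fract(σ + 1/2) − u_m/2. Then for every u with |u| < u_m, the mean square over one period is strictly positive: ∫₀¹ s₁(u,σ)² dσ > 0. (By contrast, s₁(u_m, σ) = 0 for all σ.) -/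
/-- the mean square of `s₁(u,·)` over one period is strictly
positive for `u` strictly inside the PWM range (while `s₁(u_m,·) ≡ 0`). -/
theorem pwm_s1_mean_square_positive
    (u_m : ℝ) (hum : 0 < u_m)
    (w : ℝ → ℝ) (hw : ∀ σ : ℝ, w σ = u_m * Int.fract (σ + 1/2) - u_m/2)
    (s₁ : ℝ → ℝ → ℝ)
    (hs₁ : ∀ v σ : ℝ, s₁ v σ =
      (1 - v/u_m) * w σ - |(v - u_m)/4 - w σ| + |(v - u_m)/4 + w σ|) :
    (∀ u : ℝ, |u| < u_m → 0 < ∫ σ in (0:ℝ)..1, (s₁ u σ)^2) ∧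
      ∀ σ : ℝ, s₁ u_m σ = 0 := by
  constructor
  · intro u hu
    obtain ⟨hu1, hu2⟩ := abs_lt.mp hu
    set F : ℝ → ℝ := fun σ => (s₁ u σ)^2 with hFdef
    have hr : |u / u_m| < 1 := by
      rw [abs_div, abs_of_pos hum]
      exact (div_lt_one hum).mpr hu
    obtain ⟨hr1, hr2⟩ := abs_lt.mp hr
    -- measurability
    have hFeq : F = fun σ =>
        ((1 - u/u_m) * (u_m * Int.fract (σ + 1/2) - u_m/2)
          - |(u - u_m)/4 - (u_m * Int.fract (σ + 1/2) - u_m/2)|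
          + |(u - u_m)/4 + (u_m * Int.fract (σ + 1/2) - u_m/2)|)^2 := by
      funext σ
      simp only [hFdef, hs₁, hw]
    have hmeas : Measurable F := by
      rw [hFeq]
      apply Measurable.pow _ measurable_const
      apply Measurable.add
      apply Measurable.sub
      · exact (measurable_fract.comp (measurable_id.add_const _)).const_mul u_m
          |>.sub measurable_const |>.const_mul _
      · exact (measurable_const.sub ((measurable_fract.comp
          (measurable_id.add_const _)).const_mul u_m |>.sub measurable_const)).abs
      · exact (measurable_const.add ((measurable_fract.comp
          (measurable_id.add_const _)).const_mul u_m |>.sub measurable_const)).abs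
    -- boundedness
    have hbound : ∀ σ : ℝ, ‖F σ‖ ≤ 9 * u_m^2 := by
      intro σ
      have ht0 : (0:ℝ) ≤ Int.fract (σ + 1/2) := Int.fract_nonneg _
      have ht1 : Int.fract (σ + 1/2) < 1 := Int.fract_lt_one _
      set t := Int.fract (σ + 1/2)
      have hwσ : w σ = u_m * t - u_m/2 := hw σ
      have hwb : |w σ| ≤ u_m / 2 := by
        rw [hwσ, abs_le]; constructor <;> nlinarith
      have hAb : |(u - u_m)/4| ≤ u_m / 2 := by
        rw [abs_le]; constructor <;> nlinarith
      have hX : |(1 - u/u_m) * w σ| ≤ u_m := by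
        rw [abs_mul]
        calc |1 - u/u_m| * |w σ| ≤ 2 * (u_m/2) := by
              apply mul_le_mul _ hwb (abs_nonneg _) (by norm_num)
              rw [abs_le]; constructor <;> linarith
          _ = u_m := by ring
      have hY : |(u - u_m)/4 - w σ| ≤ u_m := by
        calc |(u - u_m)/4 - w σ| ≤ |(u - u_m)/4| + |w σ| := abs_sub _ _
          _ ≤ u_m/2 + u_m/2 := add_le_add hAb hwb
          _ = u_m := by ring
      have hZ : |(u - u_m)/4 + w σ| ≤ u_m := by
        calc |(u - u_m)/4 + w σ| ≤ |(u - u_m)/4| + |w σ| := abs_add_le _ _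
          _ ≤ u_m/2 + u_m/2 := add_le_add hAb hwb
          _ = u_m := by ring
      obtain ⟨hX1, hX2⟩ := abs_le.mp hX
      have hYn := abs_nonneg ((u - u_m)/4 - w σ)
      have hZn := abs_nonneg ((u - u_m)/4 + w σ)
      have hs : |s₁ u σ| ≤ 3 * u_m := by
        rw [hs₁, abs_le]
        constructor <;> linarith
      have hFσ : ‖F σ‖ = |s₁ u σ|^2 := by
        simp only [hFdef, Real.norm_eq_abs, abs_pow]
      rw [hFσ]
      nlinarith [abs_nonneg (s₁ u σ)]
    -- integrability on [0,1]
    have hInt : IntervalIntegrable F MeasureTheory.volume 0 1 := by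
      rw [intervalIntegrable_iff, Set.uIoc_of_le (by norm_num : (0:ℝ) ≤ 1)]
      apply MeasureTheory.Integrable.mono'
        ((MeasureTheory.integrableOn_const_iff (C := 9 * u_m^2)).mpr (Or.inr measure_Ioc_lt_top))
        hmeas.aestronglyMeasurable
      filter_upwards with x using hbound x
    -- integrability on the subinterval
    have hIntSub : IntervalIntegrable F MeasureTheory.volume (1/8) (1/4) := by
      apply hInt.mono_set
      rw [Set.uIcc_of_le (by norm_num : (1:ℝ)/8 ≤ 1/4),
        Set.uIcc_of_le (by norm_num : (0:ℝ) ≤ 1)]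
      exact Set.Icc_subset_Icc (by norm_num) (by norm_num)
    -- positivity on the subinterval
    have hpos : 0 < ∫ σ in (1/8:ℝ)..(1/4), F σ := by
      apply intervalIntegral.intervalIntegral_pos_of_pos_on hIntSub _ (by norm_num)
      intro σ hσ
      obtain ⟨h1, h2⟩ := hσ
      have hfr : Int.fract (σ + 1/2) = σ + 1/2 :=
        Int.fract_eq_self.mpr ⟨by linarith, by linarith⟩
      have hwσ : w σ = u_m * σ := by rw [hw, hfr]; ring
      have hneg : s₁ u σ < 0 := by
        have hlin : (1 - u/u_m) * (u_m * σ) = (u_m - u) * σ := by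
          field_simp
        rw [hs₁, hwσ, hlin,
          abs_of_neg (by nlinarith : (u - u_m)/4 - u_m * σ < 0)]
        rcases le_or_gt 0 ((u - u_m)/4 + u_m * σ) with h | h
        · rw [abs_of_nonneg h]
          nlinarith [mul_pos (sub_pos.mpr hu2) (by linarith : (0:ℝ) < 1/2 - σ)]
        · rw [abs_of_neg h]
          nlinarith [mul_pos (by linarith : (0:ℝ) < u + u_m) (by linarith : (0:ℝ) < σ)]
      simp only [hFdef]
      nlinarith
    have hmono : (∫ σ in (1/8:ℝ)..(1/4), F σ) ≤ ∫ σ in (0:ℝ)..1, F σ := by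
      apply intervalIntegral.integral_mono_interval (by norm_num) (by norm_num)
        (by norm_num) _ hInt
      filter_upwards with x
      simp only [hFdef]
      positivity
    calc (0:ℝ) < ∫ σ in (1/8:ℝ)..(1/4), F σ := hpos
      _ ≤ ∫ σ in (0:ℝ)..1, F σ := hmono
  · intro σ
    rw [hs₁, div_self hum.ne', sub_self]
    simp [abs_neg, abs_sub_comm]
end

section
/- (Extension of Besjes' lemma.) Let T > 0, L > 0, ε > 0, λ > 0, c₀ > 0. Let φ : ℝⁿ × ℝ → ℝᵐ be measurable, T-periodic in its second argument, with ∫₀^T φ(X,s) ds = 0 for every X, and ‖φ(X,s)‖ ≤ c₀ for all X, s. Let x : [0, L/ε] → ℝⁿ be continuous and assume that for every a ≥ 0 with a + T ≤ L/ε, ∫_a^{a+T} ‖φ(x(s), s) − φ(x(a), s)‖ ds ≤ λ T ε. Then for every t ∈ [0, L/ε], ‖∫₀^t φ(x(s), s) ds‖ ≤ λ L + c₀ T. -/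
open MeasureTheory

/-- extension of Besjes' lemma: the integral along a slowly
moving trajectory of a bounded, periodic, zero-mean perturbation that is
slowly-varying in average along the trajectory stays bounded by `λL + c₀T`
on the timescale `L/ε`. -/
theorem besjes_lemma_extension
    {n m : ℕ} (T L ε lam c₀ : ℝ)
    (hT : 0 < T) (hL : 0 < L) (hε : 0 < ε) (hlam : 0 < lam) (hc₀ : 0 < c₀)
    (φ : EuclideanSpace ℝ (Fin n) → ℝ → EuclideanSpace ℝ (Fin m))
    (hmeas : Measurable (fun p : EuclideanSpace ℝ (Fin n) × ℝ => φ p.1 p.2))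
    (hper : ∀ (X : EuclideanSpace ℝ (Fin n)), Function.Periodic (φ X) T)
    (hzero : ∀ X : EuclideanSpace ℝ (Fin n), (∫ s in (0:ℝ)..T, φ X s) = 0)
    (hbdd : ∀ (X : EuclideanSpace ℝ (Fin n)) (s : ℝ), ‖φ X s‖ ≤ c₀)
    (x : ℝ → EuclideanSpace ℝ (Fin n))
    (hx : ContinuousOn x (Set.Icc 0 (L/ε)))
    (hslow : ∀ a : ℝ, 0 ≤ a → a + T ≤ L/ε →
      (∫ s in a..(a + T), ‖φ (x s) s - φ (x a) s‖) ≤ lam * T * ε) :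
    ∀ t ∈ Set.Icc (0:ℝ) (L/ε),
      ‖∫ s in (0:ℝ)..t, φ (x s) s‖ ≤ lam * L + c₀ * T := by
  -- integrability of the trajectory integrand on intervals inside [0, L/ε]
  have hxmeas : AEMeasurable x (volume.restrict (Set.Icc 0 (L/ε))) :=
    hx.aemeasurable measurableSet_Icc
  have hInt : ∀ a b : ℝ, 0 ≤ a → b ≤ L/ε → a ≤ b →
      IntervalIntegrable (fun s => φ (x s) s) volume a b := by
    intro a b ha hb hab
    rw [intervalIntegrable_iff_integrableOn_Ioc_of_le hab]
    have hsub : Set.Ioc a b ⊆ Set.Icc 0 (L/ε) := fun s hs =>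
      ⟨le_trans ha hs.1.le, le_trans hs.2 hb⟩
    have hxm : AEMeasurable x (volume.restrict (Set.Ioc a b)) :=
      hxmeas.mono_measure (Measure.restrict_mono hsub le_rfl)
    have hpair : AEMeasurable (fun s => (x s, s))
        (volume.restrict (Set.Ioc a b)) := hxm.prodMk aemeasurable_id
    have hφm : AEStronglyMeasurable (fun s => φ (x s) s)
        (volume.restrict (Set.Ioc a b)) :=
      (hmeas.comp_aemeasurable hpair).aestronglyMeasurable
    refine Integrable.mono' (integrable_const c₀) hφm ?_
    exact Filter.Eventually.of_forall fun s => hbdd _ _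
  -- integrability of the frozen integrand
  have hIntX : ∀ (X : EuclideanSpace ℝ (Fin n)) (a b : ℝ),
      IntervalIntegrable (fun s => φ X s) volume a b := by
    intro X a b
    have hm : Measurable (fun s : ℝ => φ X s) :=
      hmeas.comp (measurable_const.prodMk measurable_id)
    constructor <;>
    · refine Integrable.mono' (integrable_const c₀)
        hm.aestronglyMeasurable ?_
      exact Filter.Eventually.of_forall fun s => hbdd _ _
  -- the frozen integrand has zero integral over any period
  have hzero' : ∀ (X : EuclideanSpace ℝ (Fin n)) (a : ℝ),
      (∫ s in a..(a + T), φ X s) = 0 := by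
    intro X a
    have := (hper X).intervalIntegral_add_eq a 0
    rw [this, zero_add, hzero X]
  -- each full period contributes at most lam * T * ε
  have hperiod : ∀ a : ℝ, 0 ≤ a → a + T ≤ L/ε →
      ‖∫ s in a..(a + T), φ (x s) s‖ ≤ lam * T * ε := by
    intro a ha haT
    have haT' : a ≤ a + T := by linarith
    have h1 : (∫ s in a..(a + T), φ (x s) s)
        = (∫ s in a..(a + T), (φ (x s) s - φ (x a) s))
          + ∫ s in a..(a + T), φ (x a) s := by
      rw [← intervalIntegral.integral_add
        ((hInt a (a+T) ha haT haT').sub (hIntX (x a) a (a+T)))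
        (hIntX (x a) a (a+T))]
      simp
    rw [h1, hzero' (x a) a, add_zero]
    calc ‖∫ s in a..(a + T), (φ (x s) s - φ (x a) s)‖
        ≤ ∫ s in a..(a + T), ‖φ (x s) s - φ (x a) s‖ :=
          intervalIntegral.norm_integral_le_integral_norm haT'
      _ ≤ lam * T * ε := hslow a ha haT
  -- inductively, N full periods contribute at most N * (lam * T * ε)
  have hN : ∀ N : ℕ, (N : ℝ) * T ≤ L/ε →
      ‖∫ s in (0:ℝ)..((N : ℝ) * T), φ (x s) s‖ ≤ N * (lam * T * ε) := by
    intro N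
    induction N with
    | zero => intro _; simp
    | succ k ih =>
      intro hk
      have hkT : (k : ℝ) * T ≤ L/ε := by
        push_cast at hk ⊢
        nlinarith [hT.le]
      have hk0 : (0:ℝ) ≤ (k : ℝ) * T := by positivity
      have hsucc : ((k+1 : ℕ) : ℝ) * T = (k : ℝ) * T + T := by push_cast; ring
      have hkTL : (k : ℝ) * T + T ≤ L/ε := by rw [← hsucc]; exact hk
      have hsplit : (∫ s in (0:ℝ)..((k:ℝ) * T + T), φ (x s) s)
          = (∫ s in (0:ℝ)..((k:ℝ) * T), φ (x s) s)
            + ∫ s in ((k:ℝ) * T)..((k:ℝ) * T + T), φ (x s) s :=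
        (intervalIntegral.integral_add_adjacent_intervals
          (hInt 0 ((k:ℝ)*T) le_rfl (le_trans (by linarith) hkTL) hk0)
          (hInt ((k:ℝ)*T) ((k:ℝ)*T+T) hk0 hkTL (by linarith))).symm
      rw [hsucc, hsplit]
      calc ‖(∫ s in (0:ℝ)..((k:ℝ) * T), φ (x s) s)
            + ∫ s in ((k:ℝ) * T)..((k:ℝ) * T + T), φ (x s) s‖
          ≤ ‖∫ s in (0:ℝ)..((k:ℝ) * T), φ (x s) s‖
            + ‖∫ s in ((k:ℝ) * T)..((k:ℝ) * T + T), φ (x s) s‖ :=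
            norm_add_le _ _
        _ ≤ (k : ℝ) * (lam * T * ε) + lam * T * ε := by
            gcongr
            · exact ih hkT
            · exact hperiod ((k:ℝ)*T) hk0 hkTL
        _ = ((k+1 : ℕ) : ℝ) * (lam * T * ε) := by push_cast; ring
  intro t ht
  obtain ⟨ht0, htL⟩ := ht
  set N : ℕ := ⌊t / T⌋₊ with hNdef
  have hNT : (N : ℝ) * T ≤ t := by
    have h := Nat.floor_le (div_nonneg ht0 hT.le)
    calc (N : ℝ) * T ≤ (t / T) * T := mul_le_mul_of_nonneg_right h hT.le
      _ = t := by field_simp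
  have htNT : t < ((N : ℝ) + 1) * T := by
    have := Nat.lt_floor_add_one (t / T)
    calc t = (t / T) * T := by field_simp
      _ < ((N : ℝ) + 1) * T := by
          apply mul_lt_mul_of_pos_right _ hT
          exact_mod_cast this
  have hNTL : (N : ℝ) * T ≤ L / ε := le_trans hNT htL
  have hsplit : (∫ s in (0:ℝ)..t, φ (x s) s)
      = (∫ s in (0:ℝ)..((N:ℝ) * T), φ (x s) s)
        + ∫ s in ((N:ℝ) * T)..t, φ (x s) s :=
    (intervalIntegral.integral_add_adjacent_intervals
      (hInt 0 ((N:ℝ)*T) le_rfl (le_trans hNT htL) (by positivity))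
      (hInt ((N:ℝ)*T) t (by positivity) htL hNT)).symm
  rw [hsplit]
  have h1 : ‖∫ s in (0:ℝ)..((N:ℝ) * T), φ (x s) s‖ ≤ lam * L := by
    calc ‖∫ s in (0:ℝ)..((N:ℝ) * T), φ (x s) s‖
        ≤ N * (lam * T * ε) := hN N hNTL
      _ = lam * ((N : ℝ) * T) * ε := by ring
      _ ≤ lam * (L / ε) * ε := by gcongr
      _ = lam * L := by field_simp
  have h2 : ‖∫ s in ((N:ℝ) * T)..t, φ (x s) s‖ ≤ c₀ * T := by
    calc ‖∫ s in ((N:ℝ) * T)..t, φ (x s) s‖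
        ≤ c₀ * |t - (N:ℝ) * T| :=
          intervalIntegral.norm_integral_le_of_norm_le_const
            (fun s _ => hbdd _ _)
      _ ≤ c₀ * T := by
          apply mul_le_mul_of_nonneg_left _ hc₀.le
          rw [abs_of_nonneg (by linarith)]
          nlinarith
  calc ‖_ + _‖ ≤ _ + _ := norm_add_le _ _
    _ ≤ lam * L + c₀ * T := add_le_add h1 h2
end

section
/- (Gronwall estimate for the averaged comparison.) Let F : ℝⁿ → ℝⁿ be globally Lipschitz with constant λ_F > 0, let ε > 0, L > 0, c₁, c₂ ≥ 0, and X₀ ∈ ℝⁿ. Let X̄, X̃ : [0, L/ε] → ℝⁿ be continuous and satisfy, for all σ ∈ [0, L/ε], X̄(σ) = X₀ + ε∫₀^σ F(X̄(s)) ds and X̃(σ) = X₀ + ε∫₀^σ F(X̃(s)) ds + R(σ), where the remainder satisfies ‖R(σ)‖ ≤ c₁ε² + c₂ε³σ for all σ. Then for all σ ∈ [0, L/ε], ‖X̃(σ) − X̄(σ)‖ ≤ (c₁ + c₂/λ_F)·e^{λ_F ε σ}·ε², and in particular ‖X̃(σ) − X̄(σ)‖ ≤ (c₁ + c₂/λ_F)·e^{λ_F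 L}·ε². -/
open MeasureTheory

/-- Gronwall estimate for the averaged comparison, Lemma 2 of
the paper in explicit form: if `X̃` solves the averaged integral equation up
to a remainder bounded by `c₁ε² + c₂ε³σ`, then `X̃ = X̄ + O(ε²)` on the
timescale `1/ε` in the fast time `σ`. -/
theorem gronwall_averaged_comparison
    {n : ℕ} (F : EuclideanSpace ℝ (Fin n) → EuclideanSpace ℝ (Fin n))
    (lamF ε L c₁ c₂ : ℝ)
    (hlamF : 0 < lamF) (hε : 0 < ε) (hL : 0 < L) (hc₁ : 0 ≤ c₁) (hc₂ : 0 ≤ c₂)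
    (hF : ∀ X Y : EuclideanSpace ℝ (Fin n), ‖F X - F Y‖ ≤ lamF * ‖X - Y‖)
    (X₀ : EuclideanSpace ℝ (Fin n))
    (Xbar Xtil R : ℝ → EuclideanSpace ℝ (Fin n))
    (hXbar_cont : ContinuousOn Xbar (Set.Icc 0 (L/ε)))
    (hXtil_cont : ContinuousOn Xtil (Set.Icc 0 (L/ε)))
    (hXbar : ∀ σ ∈ Set.Icc (0:ℝ) (L/ε),
      Xbar σ = X₀ + ε • ∫ s in (0:ℝ)..σ, F (Xbar s))
    (hXtil : ∀ σ ∈ Set.Icc (0:ℝ) (L/ε),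
      Xtil σ = X₀ + (ε • ∫ s in (0:ℝ)..σ, F (Xtil s)) + R σ)
    (hR : ∀ σ ∈ Set.Icc (0:ℝ) (L/ε), ‖R σ‖ ≤ c₁ * ε^2 + c₂ * ε^3 * σ) :
    ∀ σ ∈ Set.Icc (0:ℝ) (L/ε),
      ‖Xtil σ - Xbar σ‖ ≤ (c₁ + c₂/lamF) * Real.exp (lamF * ε * σ) * ε^2 ∧
      ‖Xtil σ - Xbar σ‖ ≤ (c₁ + c₂/lamF) * Real.exp (lamF * L) * ε^2 := by
  set T : ℝ := L / ε with hTdef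
  have hT : 0 < T := div_pos hL hε
  have hT0 : (0:ℝ) ≤ T := hT.le
  -- F is continuous
  have hFcont : Continuous F := by
    have : LipschitzWith (Real.toNNReal lamF) F := by
      apply LipschitzWith.of_dist_le_mul
      intro x y
      rw [dist_eq_norm, dist_eq_norm]
      simpa [Real.coe_toNNReal _ hlamF.le] using hF x y
    exact this.continuous
  -- extended difference function
  set Y : ℝ → EuclideanSpace ℝ (Fin n) :=
    Set.IccExtend hT0 ((Set.Icc (0:ℝ) T).restrict (fun σ => Xtil σ - Xbar σ)) with hYdef
  have hYcont : Continuous Y := by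
    apply ContinuousOn.restrict (hXtil_cont.sub hXbar_cont) |>.comp continuous_projIcc
  have hYeq : ∀ σ ∈ Set.Icc (0:ℝ) T, Y σ = Xtil σ - Xbar σ := fun σ hσ =>
    Set.IccExtend_of_mem hT0 _ hσ
  set v : ℝ → ℝ := fun σ => ‖Y σ‖ with hvdef
  have hvcont : Continuous v := hYcont.norm
  have hvnonneg : ∀ σ, 0 ≤ v σ := fun σ => norm_nonneg _
  set k : ℝ := lamF * ε with hkdef
  have hk : 0 < k := mul_pos hlamF hε
  set a : ℝ := c₁ * ε ^ 2 with hadef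
  set b : ℝ := c₂ * ε ^ 3 with hbdef
  have ha : 0 ≤ a := mul_nonneg hc₁ (by positivity)
  have hb : 0 ≤ b := mul_nonneg hc₂ (by positivity)
  set W : ℝ → ℝ := fun σ => ∫ s in (0:ℝ)..σ, v s with hWdef
  have hWnonneg : ∀ σ ∈ Set.Icc (0:ℝ) T, 0 ≤ W σ := by
    intro σ hσ
    exact intervalIntegral.integral_nonneg hσ.1 (fun s _ => hvnonneg s)
  -- key integral inequality
  have key : ∀ σ ∈ Set.Icc (0:ℝ) T, v σ ≤ k * W σ + (a + b * σ) := by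
    intro σ hσ
    have hsub : Set.uIcc (0:ℝ) σ ⊆ Set.Icc 0 T := by
      rw [Set.uIcc_of_le hσ.1]
      exact Set.Icc_subset_Icc le_rfl hσ.2
    have hmem : ∀ s ∈ Set.uIcc (0:ℝ) σ, s ∈ Set.Icc (0:ℝ) T := fun s hs => hsub hs
    have hintTil : IntervalIntegrable (fun s => F (Xtil s)) volume 0 σ :=
      ((hFcont.comp_continuousOn (hXtil_cont.mono hsub))).intervalIntegrable
    have hintBar : IntervalIntegrable (fun s => F (Xbar s)) volume 0 σ :=
      ((hFcont.comp_continuousOn (hXbar_cont.mono hsub))).intervalIntegrable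
    have hdiff : Xtil σ - Xbar σ
        = ε • (∫ s in (0:ℝ)..σ, (F (Xtil s) - F (Xbar s))) + R σ := by
      rw [hXtil σ hσ, hXbar σ hσ, intervalIntegral.integral_sub hintTil hintBar,
        smul_sub]
      abel
    have hnormint : ‖∫ s in (0:ℝ)..σ, (F (Xtil s) - F (Xbar s))‖
        ≤ ∫ s in (0:ℝ)..σ, lamF * v s := by
      refine le_trans (intervalIntegral.norm_integral_le_integral_norm hσ.1) ?_
      apply intervalIntegral.integral_mono_on hσ.1
      · exact (hintTil.sub hintBar).norm
      · exact ((hvcont.const_smul lamF).intervalIntegrable _ _)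
      · intro s hs
        have hsmem : s ∈ Set.Icc (0:ℝ) T := hmem s (by
          rw [Set.uIcc_of_le hσ.1]; exact hs)
        have hvs : v s = ‖Xtil s - Xbar s‖ := by
          show ‖Y s‖ = _; rw [hYeq s hsmem]
        rw [hvs]
        exact hF _ _
    have hWσ : ∫ s in (0:ℝ)..σ, lamF * v s = lamF * W σ := by
      rw [hWdef]; simp [intervalIntegral.integral_const_mul]
    calc v σ = ‖Xtil σ - Xbar σ‖ := by show ‖Y σ‖ = _; rw [hYeq σ hσ]
      _ ≤ ‖ε • (∫ s in (0:ℝ)..σ, (F (Xtil s) - F (Xbar s)))‖ + ‖R σ‖ := by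
          rw [hdiff]; exact norm_add_le _ _
      _ ≤ ε * (lamF * W σ) + (a + b * σ) := by
          gcongr
          · rw [norm_smul, Real.norm_of_nonneg hε.le]
            exact mul_le_mul_of_nonneg_left (hWσ ▸ hnormint) hε.le
          · simpa [hadef, hbdef] using hR σ hσ
      _ = k * W σ + (a + b * σ) := by ring
  -- Gronwall setup
  set f : ℝ → ℝ := fun σ => W σ + (b / k) * σ with hfdef
  set f' : ℝ → ℝ := fun σ => v σ + b / k with hf'def
  have hbk : 0 ≤ b / k := div_nonneg hb hk.le
  have hfderiv : ∀ x, HasDerivAt f (f' x) x := by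
    intro x
    have h1 : HasDerivAt W (v x) x :=
      (hvcont.integral_hasStrictDerivAt 0 x).hasDerivAt
    have h2 : HasDerivAt (fun σ : ℝ => (b / k) * σ) (b / k) x := by
      simpa using (hasDerivAt_id x).const_mul (b / k)
    exact h1.add h2
  have hfnonneg : ∀ x ∈ Set.Icc (0:ℝ) T, 0 ≤ f x := by
    intro x hx
    exact add_nonneg (hWnonneg x hx) (mul_nonneg hbk hx.1)
  have gron : ∀ x ∈ Set.Icc (0:ℝ) T,
      ‖f x‖ ≤ gronwallBound 0 k (a + b / k) (x - 0) := by
    have hfcont : Continuous f := by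
      have : Continuous W := by
        apply intervalIntegral.continuous_primitive
        intro x y; exact hvcont.intervalIntegrable x y
      exact this.add (continuous_const.mul continuous_id)
    apply norm_le_gronwallBound_of_norm_deriv_right_le hfcont.continuousOn
      (fun x _ => (hfderiv x).hasDerivWithinAt)
    · have : f 0 = 0 := by simp [hfdef, hWdef, intervalIntegral.integral_same]
      simp [this]
    · intro x hx
      have hxIcc : x ∈ Set.Icc (0:ℝ) T := ⟨hx.1, hx.2.le⟩
      have h1 : ‖f' x‖ = v x + b / k := by
        rw [hf'def, Real.norm_of_nonneg (add_nonneg (hvnonneg x) hbk)]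
      have h2 : ‖f x‖ = f x := Real.norm_of_nonneg (hfnonneg x hxIcc)
      rw [h1, h2]
      have := key x hxIcc
      have hkbk : k * (b / k) = b := by field_simp
      calc v x + b / k ≤ (k * W x + (a + b * x)) + b / k := by linarith
        _ = k * f x + (a + b / k) := by
            rw [hfdef]; simp only []; ring_nf
            field_simp
            ring
  -- final estimate
  intro σ hσ
  have hgb : gronwallBound 0 k (a + b / k) (σ - 0)
      = (a + b / k) / k * (Real.exp (k * σ) - 1) := by
    rw [gronwallBound_of_K_ne_0 hk.ne']
    simp
  have habk : 0 ≤ a + b / k := add_nonneg ha hbk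
  have hvb : v σ ≤ (a + b / k) * Real.exp (k * σ) := by
    have hg := gron σ hσ
    rw [hgb] at hg
    have hfσ : f σ ≤ (a + b / k) / k * (Real.exp (k * σ) - 1) :=
      le_trans (le_abs_self _) hg
    have hkfs : k * f σ = k * W σ + b * σ := by
      show k * (W σ + (b / k) * σ) = _
      field_simp
    have h3 : v σ ≤ k * f σ + a := by
      have := key σ hσ
      linarith
    have h4 : k * f σ ≤ (a + b / k) * (Real.exp (k * σ) - 1) := by
      calc k * f σ ≤ k * ((a + b / k) / k * (Real.exp (k * σ) - 1)) := by
            exact mul_le_mul_of_nonneg_left hfσ hk.le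
        _ = (a + b / k) * (Real.exp (k * σ) - 1) := by field_simp
    have hexp : (1:ℝ) ≤ Real.exp (k * σ) :=
      Real.one_le_exp (mul_nonneg hk.le hσ.1)
    calc v σ ≤ k * f σ + a := h3
      _ ≤ (a + b / k) * (Real.exp (k * σ) - 1) + a := by linarith
      _ = (a + b / k) * Real.exp (k * σ) - b / k := by ring
      _ ≤ (a + b / k) * Real.exp (k * σ) := by linarith
  have hval : (a + b / k) = (c₁ + c₂ / lamF) * ε ^ 2 := by
    rw [hadef, hbdef, hkdef]; field_simp
  have hfirst : ‖Xtil σ - Xbar σ‖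
      ≤ (c₁ + c₂ / lamF) * Real.exp (lamF * ε * σ) * ε ^ 2 := by
    have : v σ = ‖Xtil σ - Xbar σ‖ := by show ‖Y σ‖ = _; rw [hYeq σ hσ]
    rw [← this]
    calc v σ ≤ (a + b / k) * Real.exp (k * σ) := hvb
      _ = (c₁ + c₂ / lamF) * Real.exp (lamF * ε * σ) * ε ^ 2 := by
          rw [hval, hkdef]; ring
  refine ⟨hfirst, le_trans hfirst ?_⟩
  have hεσ : lamF * ε * σ ≤ lamF * L := by
    have h1 : ε * σ ≤ L := by
      have := hσ.2
      calc ε * σ ≤ ε * (L / ε) := by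
            exact mul_le_mul_of_nonneg_left this hε.le
        _ = L := by field_simp
    calc lamF * ε * σ = lamF * (ε * σ) := by ring
      _ ≤ lamF * L := mul_le_mul_of_nonneg_left h1 hlamF.le
  have hnn : 0 ≤ c₁ + c₂ / lamF := add_nonneg hc₁ (div_nonneg hc₂ hlamF.le)
  apply mul_le_mul_of_nonneg_right _ (by positivity : (0:ℝ) ≤ ε ^ 2)
  exact mul_le_mul_of_nonneg_left (Real.exp_le_exp.mpr hεσ) hnn
end

section
/- Let y_a : ℝ → ℝ be twice differentiable with |y_a''(t)| ≤ K for all t, and for ε > 0 let M_ε(y_a)(t) := (1/ε)∫_{t−ε}^{t} y_a(τ) dτ. Then the two-point extrapolation (3/2)·M_ε(y_a)(t) − (1/2)·M_ε(y_a)(t−ε) recovers y_a to second order: for all t, |(3/2)·M_ε(y_a)(t) − (1/2)·M_ε(y_a)(t−ε) − y_a(t)| ≤ K·ε². -/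
open MeasureTheory

private lemma taylor_aux (y_a : ℝ → ℝ) (K : ℝ)
    (hy : Differentiable ℝ y_a)
    (hy' : Differentiable ℝ (deriv y_a))
    (hK : ∀ t : ℝ, |deriv (deriv y_a) t| ≤ K) :
    ∀ t τ : ℝ, τ ≤ t →
      |y_a τ - y_a t - (τ - t) * deriv y_a t| ≤ K / 2 * (t - τ) ^ 2 := by
  intro t τ hτ
  have hcont : Continuous (deriv y_a) := hy'.continuous
  have hlin : ∀ s : ℝ, |deriv y_a s - deriv y_a t| ≤ K * |s - t| := by
    intro s
    have := Convex.norm_image_sub_le_of_norm_deriv_le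
      (f := deriv y_a) (s := Set.univ) (C := K)
      (fun x _ => hy' x) (fun x _ => hK x) convex_univ (Set.mem_univ t) (Set.mem_univ s)
    simpa [Real.norm_eq_abs] using this
  have hint : IntervalIntegrable (deriv y_a) volume τ t :=
    hcont.intervalIntegrable _ _
  have hftc : ∫ s in τ..t, deriv y_a s = y_a t - y_a τ :=
    intervalIntegral.integral_deriv_eq_sub (fun x _ => hy x) hint
  have hkey : y_a τ - y_a t - (τ - t) * deriv y_a t
      = -∫ s in τ..t, (deriv y_a s - deriv y_a t) := by
    rw [intervalIntegral.integral_sub hint (intervalIntegrable_const),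
      hftc, intervalIntegral.integral_const]
    simp [smul_eq_mul]; ring
  rw [hkey, abs_neg]
  calc |∫ s in τ..t, (deriv y_a s - deriv y_a t)|
      ≤ ∫ s in τ..t, |deriv y_a s - deriv y_a t| := by
        simpa [Real.norm_eq_abs] using
          intervalIntegral.norm_integral_le_integral_norm (f := fun s => deriv y_a s - deriv y_a t)
            (μ := volume) hτ
    _ ≤ ∫ s in τ..t, K * (t - s) := by
        apply intervalIntegral.integral_mono_on hτ
        · exact ((hcont.sub continuous_const).abs).intervalIntegrable _ _
        · exact (Continuous.intervalIntegrable (by continuity) _ _)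
        · intro s hs
          have h := hlin s
          have habs : |s - t| = t - s := by
            rw [abs_sub_comm]; exact abs_of_nonneg (by linarith [hs.2])
          rw [habs] at h; exact h
    _ = K / 2 * (t - τ) ^ 2 := by
        rw [intervalIntegral.integral_const_mul]
        have : ∫ s in τ..t, (t - s) = ∫ x in (t - t)..(t - τ), x :=
          intervalIntegral.integral_comp_sub_left (fun x => x) t
        rw [this, integral_id]
        ring

/-- the two-point extrapolation of the moving average recovers
the actual output to second order:
`(3/2) M_ε(y_a)(t) − (1/2) M_ε(y_a)(t−ε) = y_a(t) + O(ε²)`. -/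
theorem moving_average_two_point_extrapolation
    (y_a : ℝ → ℝ) (K : ℝ)
    (hy : Differentiable ℝ y_a)
    (hy' : Differentiable ℝ (deriv y_a))
    (hK : ∀ t : ℝ, |deriv (deriv y_a) t| ≤ K) :
    ∀ (ε : ℝ), 0 < ε → ∀ t : ℝ,
      |(3/2) * ((1/ε) * ∫ τ in (t - ε)..t, y_a τ)
        - (1/2) * ((1/ε) * ∫ τ in (t - ε - ε)..(t - ε), y_a τ)
        - y_a t| ≤ K * ε^2 := by
  intro ε hε t
  have hK0 : 0 ≤ K := le_trans (abs_nonneg _) (hK 0)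
  have hconty : Continuous y_a := hy.continuous
  set D := deriv y_a t with hD
  set g : ℝ → ℝ := fun τ => y_a τ - y_a t - (τ - t) * D with hg
  have hcontg : Continuous g := by
    unfold g; continuity
  -- splitting of the integral
  have hsplit : ∀ a b : ℝ, (∫ τ in a..b, y_a τ)
      = (∫ τ in a..b, g τ) + ((b - a) * y_a t + D * ((b - t) ^ 2 - (a - t) ^ 2) / 2) := by
    intro a b
    have hg2 : g = fun τ => y_a τ - (y_a t + (τ - t) * D) := by
      funext τ; simp [g]; ring
    have h1 : (∫ τ in a..b, g τ)
        = (∫ τ in a..b, y_a τ) - ∫ τ in a..b, (y_a t + (τ - t) * D) := by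
      rw [hg2, intervalIntegral.integral_sub (hconty.intervalIntegrable _ _)
        (Continuous.intervalIntegrable (μ := volume) (by continuity) _ _)]
    have h3 : (∫ τ in a..b, (y_a t + (τ - t) * D))
        = (b - a) * y_a t + D * ((b - t) ^ 2 - (a - t) ^ 2) / 2 := by
      rw [intervalIntegral.integral_add (intervalIntegrable_const)
        (Continuous.intervalIntegrable (μ := volume) (by continuity) _ _),
        intervalIntegral.integral_const, intervalIntegral.integral_mul_const]
      have h4 : (∫ τ in a..b, (τ - t)) = ∫ x in (a - t)..(b - t), x :=
        intervalIntegral.integral_comp_sub_right (fun x => x) t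
      rw [h4, integral_id]; simp [smul_eq_mul]; ring
    rw [h1, h3]; ring
  -- bound on ∫ g over [t-c, t-d] for 0 ≤ d ≤ c
  have hgbound : ∀ a b : ℝ, a ≤ b → b ≤ t →
      |∫ τ in a..b, g τ| ≤ K / 6 * ((t - a) ^ 3 - (t - b) ^ 3) := by
    intro a b hab hbt
    calc |∫ τ in a..b, g τ| ≤ ∫ τ in a..b, |g τ| := by
          simpa [Real.norm_eq_abs] using
            intervalIntegral.norm_integral_le_integral_norm (f := g) (μ := volume) hab
      _ ≤ ∫ τ in a..b, K / 2 * (t - τ) ^ 2 := by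
          apply intervalIntegral.integral_mono_on hab
          · exact hcontg.abs.intervalIntegrable _ _
          · exact Continuous.intervalIntegrable (by continuity) _ _
          · intro s hs
            exact taylor_aux y_a K hy hy' hK t s (le_trans hs.2 hbt)
      _ = K / 6 * ((t - a) ^ 3 - (t - b) ^ 3) := by
          rw [intervalIntegral.integral_const_mul]
          have : (∫ τ in a..b, (t - τ) ^ 2) = ∫ x in (t - b)..(t - a), x ^ 2 :=
            intervalIntegral.integral_comp_sub_left (fun x => x ^ 2) t
          rw [this, integral_pow]
          push_cast; ring
  have hb1 := hgbound (t - ε) t (by linarith) le_rfl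
  have hb2 := hgbound (t - ε - ε) (t - ε) (by linarith) (by linarith)
  rw [hsplit (t - ε) t, hsplit (t - ε - ε) (t - ε)]
  set I1 := ∫ τ in (t - ε)..t, g τ
  set I2 := ∫ τ in (t - ε - ε)..(t - ε), g τ
  have hεne : ε ≠ 0 := ne_of_gt hε
  have hrw : (3/2) * ((1/ε) * (I1 + ((t - (t - ε)) * y_a t + D * ((t - t) ^ 2 - (t - ε - t) ^ 2) / 2)))
      - (1/2) * ((1/ε) * (I2 + ((t - ε - (t - ε - ε)) * y_a t + D * ((t - ε - t) ^ 2 - (t - ε - ε - t) ^ 2) / 2)))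
      - y_a t = (3 / (2 * ε)) * I1 - (1 / (2 * ε)) * I2 := by
    field_simp
    ring
  rw [hrw]
  have h1 : |(3 / (2 * ε)) * I1| ≤ (3 / (2 * ε)) * (K / 6 * ε ^ 3) := by
    rw [abs_mul, abs_of_pos (by positivity)]
    apply mul_le_mul_of_nonneg_left _ (by positivity)
    calc |I1| ≤ K / 6 * ((t - (t - ε)) ^ 3 - (t - t) ^ 3) := hb1
      _ = K / 6 * ε ^ 3 := by ring_nf
  have h2 : |(1 / (2 * ε)) * I2| ≤ (1 / (2 * ε)) * (K / 6 * (7 * ε ^ 3)) := by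
    rw [abs_mul, abs_of_pos (by positivity)]
    apply mul_le_mul_of_nonneg_left _ (by positivity)
    calc |I2| ≤ K / 6 * ((t - (t - ε - ε)) ^ 3 - (t - (t - ε)) ^ 3) := hb2
      _ = K / 6 * (7 * ε ^ 3) := by ring_nf
  calc |(3 / (2 * ε)) * I1 - (1 / (2 * ε)) * I2|
      ≤ |(3 / (2 * ε)) * I1| + |(1 / (2 * ε)) * I2| := abs_sub _ _
    _ ≤ (3 / (2 * ε)) * (K / 6 * ε ^ 3) + (1 / (2 * ε)) * (K / 6 * (7 * ε ^ 3)) := by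
        linarith
    _ = (5 / 6) * (K * ε ^ 2) := by field_simp; ring
    _ ≤ K * ε ^ 2 := by nlinarith [sq_nonneg ε]
end

section
/- Let ε > 0. Let u : ℝ → ℝ be Lipschitz with constant λ_u; let y_v : ℝ → ℝ satisfy |y_v(t)| ≤ K₁ε for all t and be Lipschitz with constant K₂ε; let s : ℝ × ℝ → ℝ be measurable, 1-periodic in its second argument with ∫₀¹ s(v,σ) dσ = 0 for every v, bounded by c_s, and Lipschitz in its first argument with constant λ_s uniformly in the second. Then for every t, the moving average of k_v(τ) := y_v(τ)·s(u(τ), τ/ε) satisfies |(1/ε)∫_{t−ε}^{t} y_v(τ)·s(u(τ), τ/ε) dτ| ≤ (K₂·c_s + K₁·λ_s·λ_u)·ε². -/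
open MeasureTheory

/-- the moving average over one PWM period of the ripple term
`y_v(τ)·s(u(τ), τ/ε)` is `O(ε²)`, with explicit constant. -/
theorem moving_average_ripple_term_small
    (ε : ℝ) (hε : 0 < ε)
    (u : ℝ → ℝ) (lam_u : ℝ)
    (hu : ∀ s t : ℝ, |u s - u t| ≤ lam_u * |s - t|)
    (y_v : ℝ → ℝ) (K₁ K₂ : ℝ)
    (hyv_bdd : ∀ t : ℝ, |y_v t| ≤ K₁ * ε)
    (hyv_lip : ∀ s t : ℝ, |y_v s - y_v t| ≤ (K₂ * ε) * |s - t|)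
    (s : ℝ → ℝ → ℝ)
    (hs_meas : Measurable (fun p : ℝ × ℝ => s p.1 p.2))
    (hs_per : ∀ v : ℝ, Function.Periodic (s v) 1)
    (hs_zero : ∀ v : ℝ, (∫ σ in (0:ℝ)..1, s v σ) = 0)
    (c_s : ℝ) (hs_bdd : ∀ v σ : ℝ, |s v σ| ≤ c_s)
    (lam_s : ℝ)
    (hs_lip : ∀ v v' σ : ℝ, |s v σ - s v' σ| ≤ lam_s * |v - v'|) :
    ∀ t : ℝ,
      |(1/ε) * ∫ τ in (t - ε)..t, y_v τ * s (u τ) (τ/ε)|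
        ≤ (K₂ * c_s + K₁ * lam_s * lam_u) * ε^2 := by
  intro t
  set t₀ : ℝ := t - ε with ht₀
  have ht₀t : t₀ < t := by simp [ht₀]; linarith
  -- nonnegativity of the constants
  have hcs : 0 ≤ c_s := le_trans (abs_nonneg _) (hs_bdd 0 0)
  have hlamu : 0 ≤ lam_u := by
    have h := hu 1 0
    simp at h
    exact le_trans (abs_nonneg _) h
  have hlams : 0 ≤ lam_s := by
    have h := hs_lip 1 0 0
    simp at h
    exact le_trans (abs_nonneg _) h
  have hK₁ : 0 ≤ K₁ := by
    have h := le_trans (abs_nonneg _) (hyv_bdd 0)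
    nlinarith
  have hK₂ : 0 ≤ K₂ := by
    have h := hyv_lip 1 0
    simp at h
    have h' := le_trans (abs_nonneg _) h
    nlinarith
  -- continuity
  have hu_cont : Continuous u := by
    refine (LipschitzWith.of_dist_le_mul (K := Real.toNNReal lam_u) ?_).continuous
    intro a b
    simpa [Real.dist_eq, Real.coe_toNNReal lam_u hlamu] using hu a b
  have hy_cont : Continuous y_v := by
    refine (LipschitzWith.of_dist_le_mul (K := Real.toNNReal (K₂ * ε)) ?_).continuous
    intro a b
    have hKε : 0 ≤ K₂ * ε := mul_nonneg hK₂ hε.le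
    simpa [Real.dist_eq, Real.coe_toNNReal _ hKε] using hyv_lip a b
  -- the integrand functions
  set f : ℝ → ℝ := fun τ => y_v τ * s (u τ) (τ/ε) with hf
  set g : ℝ → ℝ := fun τ => y_v t₀ * s (u t₀) (τ/ε) with hg
  have hmeas_f : Measurable f :=
    hy_cont.measurable.mul
      (hs_meas.comp (hu_cont.measurable.prodMk (measurable_id.div_const ε)))
  have hmeas_g : Measurable g :=
    measurable_const.mul
      (hs_meas.comp (measurable_const.prodMk (measurable_id.div_const ε)))
  have hbdd : ∀ (h : ℝ → ℝ), Measurable h → (∀ x, ‖h x‖ ≤ K₁ * ε * c_s) →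
      IntervalIntegrable h volume t₀ t := by
    intro h hm hb
    rw [intervalIntegrable_iff]
    exact Measure.integrableOn_of_bounded measure_Ioc_lt_top.ne
      hm.aestronglyMeasurable (Filter.Eventually.of_forall fun x => hb x)
  have hf_bd : ∀ x, ‖f x‖ ≤ K₁ * ε * c_s := by
    intro x
    rw [Real.norm_eq_abs, hf, abs_mul]
    exact mul_le_mul (hyv_bdd x) (hs_bdd _ _) (abs_nonneg _)
      (mul_nonneg hK₁ hε.le)
  have hg_bd : ∀ x, ‖g x‖ ≤ K₁ * ε * c_s := by
    intro x
    rw [Real.norm_eq_abs, hg, abs_mul]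
    exact mul_le_mul (hyv_bdd t₀) (hs_bdd _ _) (abs_nonneg _)
      (mul_nonneg hK₁ hε.le)
  have hint_f : IntervalIntegrable f volume t₀ t := hbdd f hmeas_f hf_bd
  have hint_g : IntervalIntegrable g volume t₀ t := hbdd g hmeas_g hg_bd
  -- the frozen term integrates to zero over one period
  have key : (∫ τ in t₀..t, s (u t₀) (τ/ε)) = 0 := by
    rw [intervalIntegral.integral_comp_div (f := fun σ => s (u t₀) σ) (ne_of_gt hε)]
    have hteq : t / ε = t₀ / ε + 1 := by
      field_simp [ht₀]
      rw [ht₀]; ring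
    rw [hteq, (hs_per (u t₀)).intervalIntegral_add_eq (t₀/ε) 0, zero_add,
      hs_zero, smul_zero]
  have hg_zero : (∫ τ in t₀..t, g τ) = 0 := by
    simp only [hg]
    rw [intervalIntegral.integral_const_mul, key, mul_zero]
  have hsplit : (∫ τ in t₀..t, f τ) = ∫ τ in t₀..t, (f τ - g τ) := by
    rw [intervalIntegral.integral_sub hint_f hint_g, hg_zero, sub_zero]
  -- pointwise bound on the difference
  set C : ℝ := K₂ * c_s + K₁ * lam_s * lam_u with hCdef
  have hb : ∀ τ ∈ Set.uIoc t₀ t, ‖f τ - g τ‖ ≤ C * ε^2 := by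
    intro τ hτ
    rw [Set.uIoc_of_le ht₀t.le] at hτ
    have hdist : |τ - t₀| ≤ ε := by
      rw [abs_of_nonneg (by linarith [hτ.1] : (0:ℝ) ≤ τ - t₀)]
      have := hτ.2
      simp only [ht₀] at *
      linarith
    have h1 : |y_v τ - y_v t₀| ≤ K₂ * ε * ε :=
      le_trans (hyv_lip τ t₀) (by
        have : (0:ℝ) ≤ K₂ * ε := mul_nonneg hK₂ hε.le
        nlinarith)
    have h2 : |s (u τ) (τ/ε) - s (u t₀) (τ/ε)| ≤ lam_s * (lam_u * ε) := by
      refine le_trans (hs_lip _ _ _) ?_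
      have := le_trans (hu τ t₀) (by nlinarith : lam_u * |τ - t₀| ≤ lam_u * ε)
      nlinarith
    have heq : f τ - g τ
        = (y_v τ - y_v t₀) * s (u τ) (τ/ε)
          + y_v t₀ * (s (u τ) (τ/ε) - s (u t₀) (τ/ε)) := by
      simp only [hf, hg]; ring
    rw [Real.norm_eq_abs, heq]
    calc |(y_v τ - y_v t₀) * s (u τ) (τ/ε)
          + y_v t₀ * (s (u τ) (τ/ε) - s (u t₀) (τ/ε))|
        ≤ |y_v τ - y_v t₀| * |s (u τ) (τ/ε)|
          + |y_v t₀| * |s (u τ) (τ/ε) - s (u t₀) (τ/ε)| := by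
          rw [← abs_mul, ← abs_mul]; exact abs_add_le _ _
      _ ≤ (K₂ * ε * ε) * c_s + (K₁ * ε) * (lam_s * (lam_u * ε)) := by
          gcongr
          all_goals
            first
              | positivity
              | exact hs_bdd _ _
              | exact hyv_bdd _
      _ = C * ε^2 := by rw [hCdef]; ring
  have hnorm := intervalIntegral.norm_integral_le_of_norm_le_const hb
  rw [← hsplit] at hnorm
  have habs : |∫ τ in t₀..t, f τ| ≤ C * ε^2 * ε := by
    rw [Real.norm_eq_abs] at hnorm
    refine le_trans hnorm ?_
    have : |t - t₀| = ε := by rw [ht₀]; rw [abs_of_pos (by linarith)]; ring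
    rw [this]
  have hstep : |(1/ε) * ∫ τ in t₀..t, f τ| ≤ C * ε^2 := by
    rw [abs_mul, abs_of_pos (by positivity : (0:ℝ) < 1/ε)]
    calc (1/ε) * |∫ τ in t₀..t, f τ| ≤ (1/ε) * (C * ε^2 * ε) := by
          gcongr
      _ = C * ε^2 := by field_simp
  exact hstep
end

section
/- Let ε > 0. Let u : ℝ → ℝ be Lipschitz with constant λ_u; let y_v : ℝ → ℝ satisfy |y_v(t)| ≤ K₁ε for all t and be Lipschitz with constant K₂ε; let s : ℝ × ℝ → ℝ be measurable, 1-periodic in its second argument, bounded by c_s, and Lipschitz in its first argument with constant λ_s uniformly in the second. Then for every t, |(1/ε)∫_{t−ε}^{t} y_v(τ)·s(u(τ), τ/ε)² dτ − y_v(t)·∫₀¹ s(u(t),σ)² dσ| ≤ (K₂·c_s² + 2·K₁·c_s·λ_s·λ_u)·ε². -/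
open MeasureTheory

/-- the moving average of the squared-ripple correlation term
`y_v(τ)·s(u(τ), τ/ε)²` equals `y_v(t)·∫₀¹ s(u(t),σ)² dσ` up to `O(ε²)`, with
explicit constant. -/
theorem moving_average_squared_ripple_correlation
    (ε : ℝ) (hε : 0 < ε)
    (u : ℝ → ℝ) (lam_u : ℝ)
    (hu : ∀ s t : ℝ, |u s - u t| ≤ lam_u * |s - t|)
    (y_v : ℝ → ℝ) (K₁ K₂ : ℝ)
    (hyv_bdd : ∀ t : ℝ, |y_v t| ≤ K₁ * ε)
    (hyv_lip : ∀ s t : ℝ, |y_v s - y_v t| ≤ (K₂ * ε) * |s - t|)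
    (s : ℝ → ℝ → ℝ)
    (hs_meas : Measurable (fun p : ℝ × ℝ => s p.1 p.2))
    (hs_per : ∀ v : ℝ, Function.Periodic (s v) 1)
    (c_s : ℝ) (hs_bdd : ∀ v σ : ℝ, |s v σ| ≤ c_s)
    (lam_s : ℝ)
    (hs_lip : ∀ v v' σ : ℝ, |s v σ - s v' σ| ≤ lam_s * |v - v'|) :
    ∀ t : ℝ,
      |(1/ε) * (∫ τ in (t - ε)..t, y_v τ * (s (u τ) (τ/ε))^2)
          - y_v t * ∫ σ in (0:ℝ)..1, (s (u t) σ)^2|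
        ≤ (K₂ * c_s^2 + 2 * K₁ * c_s * lam_s * lam_u) * ε^2 := by
  intro t
  have hεne : ε ≠ 0 := ne_of_gt hε
  -- basic nonnegativity facts
  have hlu : 0 ≤ lam_u := by
    have := hu 1 0
    have h0 := abs_nonneg (u 1 - u 0)
    simp at this; linarith
  have hcs : 0 ≤ c_s := le_trans (abs_nonneg _) (hs_bdd 0 0)
  have hls : 0 ≤ lam_s := by
    have := hs_lip 1 0 0
    have h0 := abs_nonneg (s 1 0 - s 0 0)
    simp at this; linarith
  have hK1 : 0 ≤ K₁ * ε := le_trans (abs_nonneg _) (hyv_bdd 0)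
  have hK2 : 0 ≤ K₂ * ε := by
    have := hyv_lip 1 0
    have h0 := abs_nonneg (y_v 1 - y_v 0)
    simp at this; linarith
  -- continuity of u and y_v
  have hu_cont : Continuous u := by
    have : LipschitzWith lam_u.toNNReal u := by
      refine LipschitzWith.of_dist_le_mul fun a b => ?_
      rw [Real.dist_eq, Real.dist_eq, Real.coe_toNNReal _ hlu]
      exact hu a b
    exact this.continuous
  have hyv_cont : Continuous y_v := by
    have : LipschitzWith (K₂ * ε).toNNReal y_v := by
      refine LipschitzWith.of_dist_le_mul fun a b => ?_
      rw [Real.dist_eq, Real.dist_eq, Real.coe_toNNReal _ hK2]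
      exact hyv_lip a b
    exact this.continuous
  -- the integrands
  set f : ℝ → ℝ := fun τ => y_v τ * (s (u τ) (τ/ε))^2 with hf_def
  set h : ℝ → ℝ := fun τ => y_v t * (s (u t) (τ/ε))^2 with hh_def
  have hsf_meas : Measurable fun τ : ℝ => s (u τ) (τ/ε) :=
    hs_meas.comp ((hu_cont.measurable).prodMk (measurable_id.div_const ε))
  have hsh_meas : Measurable fun τ : ℝ => s (u t) (τ/ε) :=
    hs_meas.comp (measurable_const.prodMk (measurable_id.div_const ε))
  have hf_meas : Measurable f := hyv_cont.measurable.mul (hsf_meas.pow_const 2)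
  have hh_meas : Measurable h := measurable_const.mul (hsh_meas.pow_const 2)
  -- integrability
  have hbound : ∀ (g : ℝ → ℝ), Measurable g → (∀ x, ‖g x‖ ≤ K₁ * ε * c_s^2) →
      IntervalIntegrable g volume (t - ε) t := by
    intro g hg hgb
    rw [intervalIntegrable_iff]
    exact Measure.integrableOn_of_bounded measure_Ioc_lt_top.ne
      hg.aestronglyMeasurable (Filter.Eventually.of_forall fun x => hgb x)
  have hbf : ∀ x, ‖f x‖ ≤ K₁ * ε * c_s^2 := by
    intro x
    have h1 := hyv_bdd x
    have h2 := hs_bdd (u x) (x/ε)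
    have h3 := abs_nonneg (s (u x) (x/ε))
    simp only [hf_def, Real.norm_eq_abs, abs_mul, abs_pow, sq_abs]
    calc |y_v x| * (s (u x) (x/ε))^2 ≤ (K₁ * ε) * (s (u x) (x/ε))^2 := by
          apply mul_le_mul_of_nonneg_right h1 (sq_nonneg _)
      _ ≤ (K₁ * ε) * c_s^2 := by
          apply mul_le_mul_of_nonneg_left _ hK1
          calc (s (u x) (x/ε))^2 = |s (u x) (x/ε)|^2 := (sq_abs _).symm
            _ ≤ c_s^2 := by nlinarith
  have hbh : ∀ x, ‖h x‖ ≤ K₁ * ε * c_s^2 := by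
    intro x
    have h1 := hyv_bdd t
    have h2 := hs_bdd (u t) (x/ε)
    have h3 := abs_nonneg (s (u t) (x/ε))
    simp only [hh_def, Real.norm_eq_abs, abs_mul, abs_pow, sq_abs]
    calc |y_v t| * (s (u t) (x/ε))^2 ≤ (K₁ * ε) * (s (u t) (x/ε))^2 := by
          apply mul_le_mul_of_nonneg_right h1 (sq_nonneg _)
      _ ≤ (K₁ * ε) * c_s^2 := by
          apply mul_le_mul_of_nonneg_left _ hK1
          calc (s (u t) (x/ε))^2 = |s (u t) (x/ε)|^2 := (sq_abs _).symm
            _ ≤ c_s^2 := by nlinarith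
  have hif : IntervalIntegrable f volume (t - ε) t := hbound f hf_meas hbf
  have hih : IntervalIntegrable h volume (t - ε) t := hbound h hh_meas hbh
  -- value of the integral of h
  have hh_int : (1/ε) * (∫ τ in (t - ε)..t, h τ)
      = y_v t * ∫ σ in (0:ℝ)..1, (s (u t) σ)^2 := by
    have hcv : (∫ τ in (t - ε)..t, (s (u t) (τ/ε))^2)
        = ε • ∫ σ in (t - ε)/ε..t/ε, (s (u t) σ)^2 :=
      intervalIntegral.integral_comp_div (fun σ => (s (u t) σ)^2) hεne
    have hper : Function.Periodic (fun σ => (s (u t) σ)^2) 1 :=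
      (hs_per (u t)).comp (fun x => x^2)
    have hshift : (∫ σ in (t - ε)/ε..t/ε, (s (u t) σ)^2)
        = ∫ σ in (0:ℝ)..1, (s (u t) σ)^2 := by
      have := hper.intervalIntegral_add_eq ((t - ε)/ε) 0
      have he : (t - ε)/ε + 1 = t/ε := by field_simp; ring
      rw [he] at this
      simpa using this
    have : (∫ τ in (t - ε)..t, h τ)
        = y_v t * (ε * ∫ σ in (0:ℝ)..1, (s (u t) σ)^2) := by
      simp only [hh_def]
      rw [intervalIntegral.integral_const_mul, hcv, hshift]
      simp [smul_eq_mul]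
    rw [this]; field_simp
  -- pointwise bound on the difference
  have hkey : ‖∫ τ in (t - ε)..t, (f τ - h τ)‖
      ≤ ((K₂ * c_s^2 + 2 * K₁ * c_s * lam_s * lam_u) * ε^2) * |t - (t - ε)| := by
    apply intervalIntegral.norm_integral_le_of_norm_le_const
    intro x hx
    have hx' : x ∈ Set.Ioc (t - ε) t := by
      rwa [Set.uIoc_of_le (by linarith : t - ε ≤ t)] at hx
    have hxt : |x - t| ≤ ε := by
      rw [abs_le]; constructor <;> [linarith [hx'.1]; linarith [hx'.2]]
    set A := s (u x) (x/ε) with hA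
    set B := s (u t) (x/ε) with hB
    have hdecomp : f x - h x = (y_v x - y_v t) * A^2 + y_v t * ((A - B) * (A + B)) := by
      simp only [hf_def, hh_def]; ring
    have hAB : |A - B| ≤ lam_s * lam_u * |x - t| := by
      calc |A - B| ≤ lam_s * |u x - u t| := hs_lip (u x) (u t) (x/ε)
        _ ≤ lam_s * (lam_u * |x - t|) :=
            mul_le_mul_of_nonneg_left (hu x t) hls
        _ = lam_s * lam_u * |x - t| := by ring
    have hAb : |A| ≤ c_s := hs_bdd _ _
    have hBb : |B| ≤ c_s := hs_bdd _ _
    have hApB : |A + B| ≤ 2 * c_s := by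
      calc |A + B| ≤ |A| + |B| := abs_add_le _ _
        _ ≤ 2 * c_s := by linarith
    have h1 : |(y_v x - y_v t) * A^2| ≤ (K₂ * ε) * ε * c_s^2 := by
      rw [abs_mul]
      have hA2 : |A^2| ≤ c_s^2 := by
        rw [abs_pow]
        exact pow_le_pow_left₀ (abs_nonneg _) hAb 2
      calc |y_v x - y_v t| * |A^2| ≤ ((K₂ * ε) * |x - t|) * |A^2| :=
            mul_le_mul_of_nonneg_right (hyv_lip x t) (abs_nonneg _)
        _ ≤ ((K₂ * ε) * ε) * c_s^2 := by
            apply mul_le_mul _ hA2 (abs_nonneg _) (by positivity)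
            exact mul_le_mul_of_nonneg_left hxt hK2
        _ = (K₂ * ε) * ε * c_s^2 := by ring
    have h2 : |y_v t * ((A - B) * (A + B))| ≤ (K₁ * ε) * (lam_s * lam_u * ε) * (2 * c_s) := by
      rw [abs_mul, abs_mul]
      have hAB' : |A - B| ≤ lam_s * lam_u * ε := by
        calc |A - B| ≤ lam_s * lam_u * |x - t| := hAB
          _ ≤ lam_s * lam_u * ε := by
              apply mul_le_mul_of_nonneg_left hxt (by positivity)
      calc |y_v t| * (|A - B| * |A + B|)
          ≤ (K₁ * ε) * ((lam_s * lam_u * ε) * (2 * c_s)) :=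
            mul_le_mul (hyv_bdd t)
              (mul_le_mul hAB' hApB (abs_nonneg _) (by positivity))
              (mul_nonneg (abs_nonneg _) (abs_nonneg _)) hK1
        _ = (K₁ * ε) * (lam_s * lam_u * ε) * (2 * c_s) := by ring
    have : ‖f x - h x‖ ≤ (K₂ * ε) * ε * c_s^2 + (K₁ * ε) * (lam_s * lam_u * ε) * (2 * c_s) := by
      rw [Real.norm_eq_abs, hdecomp]
      calc |(y_v x - y_v t) * A^2 + y_v t * ((A - B) * (A + B))|
          ≤ |(y_v x - y_v t) * A^2| + |y_v t * ((A - B) * (A + B))| := abs_add_le _ _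
        _ ≤ _ := add_le_add h1 h2
    calc ‖f x - h x‖ ≤ (K₂ * ε) * ε * c_s^2 + (K₁ * ε) * (lam_s * lam_u * ε) * (2 * c_s) := this
      _ = (K₂ * c_s^2 + 2 * K₁ * c_s * lam_s * lam_u) * ε^2 := by ring
  -- conclusion
  have hsub : (∫ τ in (t - ε)..t, (f τ - h τ))
      = (∫ τ in (t - ε)..t, f τ) - ∫ τ in (t - ε)..t, h τ :=
    intervalIntegral.integral_sub hif hih
  have habs : |t - (t - ε)| = ε := by rw [abs_of_nonneg] <;> linarith
  rw [hsub, habs] at hkey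
  have : (1/ε) * (∫ τ in (t - ε)..t, f τ) - y_v t * ∫ σ in (0:ℝ)..1, (s (u t) σ)^2
      = (1/ε) * ((∫ τ in (t - ε)..t, f τ) - ∫ τ in (t - ε)..t, h τ) := by
    rw [← hh_int]; ring
  calc |(1/ε) * (∫ τ in (t - ε)..t, f τ) - y_v t * ∫ σ in (0:ℝ)..1, (s (u t) σ)^2|
      = |1/ε| * |(∫ τ in (t - ε)..t, f τ) - ∫ τ in (t - ε)..t, h τ| := by
        rw [this, abs_mul]
    _ ≤ (1/ε) * (((K₂ * c_s^2 + 2 * K₁ * c_s * lam_s * lam_u) * ε^2) * ε) := by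
        rw [abs_of_pos (by positivity : (0:ℝ) < 1/ε)]
        exact mul_le_mul_of_nonneg_left hkey (by positivity)
    _ = (K₂ * c_s^2 + 2 * K₁ * c_s * lam_s * lam_u) * ε^2 := by field_simp
end
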